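/- arXiv:1809.00056 — 8 statements merged into one kernel-verified Lean document; each statement's English description precedes it below -/
import Mathlib

section
/- Let W be an m×m complex Hermitian positive definite matrix and let P, P_T > 0 satisfy P > 1/λ_min(W) and P_T > m/λ_min(W) − tr(W⁻¹). Define λ ≥ 0 as follows: λ = 0 if m·P ≤ P_T; otherwise λ > 0 is the solution of Σᵢ min(P, 1/λ − (W⁻¹)ᵢᵢ) = P_T. Define the Hermitian matrix R* by (R*)ᵢᵢ = min(P, 1/λ − (W⁻¹)ᵢᵢ) (interpreting 1/λ = +∞ when λ = 0, so (R*)ᵢᵢ = P in that case) and (R*)ᵢⱼ = −(W⁻¹)ᵢⱼ for i ≠ j. Then R* is positive definite, R* belongs to the joint constraint set S(P_T, P), and for every R ∈ S(P_T, P) one has log det(I + W·R) ≤ log det(I + W·R*); i.e., R* achieves the capacity under the joint total and per-antenna power constraints. -/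
open Matrix ComplexOrder

noncomputable def mutualInfo {m : ℕ} (W R : Matrix (Fin m) (Fin m) ℂ) : ℝ :=
  Real.log ((1 + W * R).det.re)

def jointSet (m : ℕ) (PT P : ℝ) : Set (Matrix (Fin m) (Fin m) ℂ) :=
  {R | R.PosSemidef ∧ R.trace.re ≤ PT ∧ ∀ i, (R i i).re ≤ P}

noncomputable def lamMin {m : ℕ} {W : Matrix (Fin m) (Fin m) ℂ} (hW : W.IsHermitian) : ℝ :=
  sInf (Set.range hW.eigenvalues)

/-- Diagonal entries: `min(P, 1/λ − (W⁻¹)ᵢᵢ)` (equal to `P` when `λ = 0`);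
off-diagonal entries: `−(W⁻¹)ᵢⱼ`. -/
noncomputable def Rstar {m : ℕ} (W : Matrix (Fin m) (Fin m) ℂ) (P lam : ℝ) :
    Matrix (Fin m) (Fin m) ℂ :=
  fun i j => if i = j then ((if lam = 0 then P else min P (1 / lam - (W⁻¹ i i).re) : ℝ) : ℂ)
    else -(W⁻¹ i j)

/- ### Auxiliary lemmas -/

lemma herm_diag_real {m : ℕ} {A : Matrix (Fin m) (Fin m) ℂ} (hA : A.IsHermitian) (i : Fin m) :
    A i i = ((A i i).re : ℂ) :=
  (Complex.conj_eq_iff_re.mp (hA.apply i i)).symm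

lemma posdef_diag_pos {m : ℕ} {A : Matrix (Fin m) (Fin m) ℂ} (hA : A.PosDef) (i : Fin m) :
    0 < (A i i).re := by
  have h := hA.dotProduct_mulVec_pos (x := Pi.single i 1) (by simp [Function.ne_iff])
  have h2 : star (Pi.single i 1 : Fin m → ℂ) ⬝ᵥ A *ᵥ (Pi.single i 1) = A i i := by
    simp [mulVec_single, dotProduct, Pi.single_apply, Finset.sum_ite_eq]
  rw [h2] at h
  exact (Complex.lt_def.mp h).1

lemma posDef_of_psd_det {m : ℕ} {M : Matrix (Fin m) (Fin m) ℂ} (h : M.PosSemidef)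
    (hd : M.det ≠ 0) : M.PosDef := by
  refine posDef_iff_dotProduct_mulVec.mpr ⟨h.1, fun x hx => (h.dotProduct_mulVec_nonneg x).lt_of_ne' fun heq => hx ?_⟩
  have h0 : M *ᵥ x = 0 := (h.dotProduct_mulVec_zero_iff x).mp heq
  have hinj : Function.Injective M.mulVec :=
    mulVec_injective_iff_isUnit.mpr ((isUnit_iff_isUnit_det _).mpr hd.isUnit)
  exact hinj (h0.trans (M.mulVec_zero).symm)

lemma trace_eq_sum_eigs {m : ℕ} {M : Matrix (Fin m) (Fin m) ℂ} (hM : M.IsHermitian) :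
    M.trace = ((∑ i, hM.eigenvalues i : ℝ) : ℂ) := by
  conv_lhs => rw [hM.spectral_theorem]
  rw [Unitary.conjStarAlgAut_apply, Matrix.trace_mul_comm, ← Matrix.mul_assoc,
    (Matrix.mem_unitaryGroup_iff').mp (hM.eigenvectorUnitary).2, one_mul, trace_diagonal]
  push_cast
  rfl

lemma logdet_le {m : ℕ} {M : Matrix (Fin m) (Fin m) ℂ} (hM : M.PosDef) :
    Real.log M.det.re ≤ M.trace.re - m := by
  have hμ := hM.eigenvalues_pos
  have hdet : M.det = ((∏ i, hM.1.eigenvalues i : ℝ) : ℂ) := by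
    rw [hM.1.det_eq_prod_eigenvalues]; push_cast; rfl
  rw [hdet, trace_eq_sum_eigs hM.1, Complex.ofReal_re, Complex.ofReal_re,
    Real.log_prod (fun i _ => (hμ i).ne')]
  calc ∑ i, Real.log (hM.1.eigenvalues i) ≤ ∑ i, (hM.1.eigenvalues i - 1) :=
        Finset.sum_le_sum fun i _ => Real.log_le_sub_one_of_pos (hμ i)
    _ = (∑ i, hM.1.eigenvalues i) - m := by
        rw [Finset.sum_sub_distrib]; simp

lemma lamMin_le {m : ℕ} {W : Matrix (Fin m) (Fin m) ℂ} (hW : W.IsHermitian)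
    (i : Fin m) : lamMin hW ≤ hW.eigenvalues i :=
  csInf_le (Set.finite_range _).bddBelow ⟨i, rfl⟩

lemma lamMin_pos {m : ℕ} (hm : 0 < m) {W : Matrix (Fin m) (Fin m) ℂ} (hW : W.PosDef) :
    0 < lamMin hW.1 := by
  haveI : Nonempty (Fin m) := Fin.pos_iff_nonempty.mp hm
  obtain ⟨j, hj⟩ := (Set.range_nonempty hW.1.eigenvalues).csInf_mem (Set.finite_range _)
  rw [lamMin, ← hj]
  exact hW.eigenvalues_pos j

lemma inv_spectral {m : ℕ} {W : Matrix (Fin m) (Fin m) ℂ} (hW : W.PosDef) :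
    W⁻¹ = (hW.1.eigenvectorUnitary : Matrix (Fin m) (Fin m) ℂ)
      * diagonal (fun i : Fin m => (((hW.1.eigenvalues i)⁻¹ : ℝ) : ℂ))
      * star (hW.1.eigenvectorUnitary : Matrix (Fin m) (Fin m) ℂ) := by
  have hμ := hW.eigenvalues_pos
  set U := (hW.1.eigenvectorUnitary : Matrix (Fin m) (Fin m) ℂ) with hU
  set D := diagonal ((RCLike.ofReal ∘ hW.1.eigenvalues) : Fin m → ℂ) with hD
  set D' := diagonal (fun i : Fin m => (((hW.1.eigenvalues i)⁻¹ : ℝ) : ℂ)) with hD'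
  have hUU : star U * U = 1 := (Matrix.mem_unitaryGroup_iff').mp (hW.1.eigenvectorUnitary).2
  have hUU' : U * star U = 1 := (Matrix.mem_unitaryGroup_iff).mp (hW.1.eigenvectorUnitary).2
  have hDD : D * D' = 1 := by
    rw [hD, hD', diagonal_mul_diagonal]
    convert diagonal_one with i
    rw [Function.comp_apply]
    push_cast
    exact mul_inv_cancel₀ (Complex.ofReal_ne_zero.mpr (hμ i).ne')
  apply inv_eq_right_inv
  have h2 : (U * D * star U) * (U * D' * star U) = 1 := by
    calc (U * D * star U) * (U * D' * star U)
        = U * D * (star U * U) * D' * star U := by noncomm_ring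
      _ = 1 := by rw [hUU, mul_one, mul_assoc U D D', hDD, mul_one, hUU']
  calc W * (U * D' * star U) = (U * D * star U) * (U * D' * star U) := by
        conv_lhs => rw [hW.1.spectral_theorem, Unitary.conjStarAlgAut_apply]
    _ = 1 := h2

lemma psd_c_sub_inv {m : ℕ} (hm : 0 < m) {W : Matrix (Fin m) (Fin m) ℂ} (hW : W.PosDef) :
    PosSemidef (diagonal (fun _ : Fin m => ((1 / lamMin hW.1 : ℝ) : ℂ)) - W⁻¹) := by
  have hμ := hW.eigenvalues_pos
  have hlm := lamMin_pos hm hW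
  set c : ℝ := 1 / lamMin hW.1 with hc
  set U := (hW.1.eigenvectorUnitary : Matrix (Fin m) (Fin m) ℂ) with hU
  have hUU' : U * star U = 1 := (Matrix.mem_unitaryGroup_iff).mp (hW.1.eigenvectorUnitary).2
  have key : diagonal (fun _ : Fin m => (c : ℂ)) - W⁻¹
      = U * diagonal (fun i : Fin m => ((c - (hW.1.eigenvalues i)⁻¹ : ℝ) : ℂ)) * Uᴴ := by
    have h1 : diagonal (fun _ : Fin m => (c : ℂ)) = U * ((c : ℂ) • 1) * star U := by
      rw [mul_smul_comm, smul_mul_assoc, mul_one, hUU', smul_one_eq_diagonal]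
    rw [h1, inv_spectral hW, ← hU, ← Matrix.star_eq_conjTranspose, ← sub_mul, ← mul_sub]
    congr 1
    congr 1
    rw [smul_one_eq_diagonal, diagonal_sub]
    congr 1
    ext i
    push_cast
    ring
  rw [key]
  refine PosSemidef.mul_mul_conjTranspose_same (posSemidef_diagonal_iff.mpr fun i => ?_) U
  rw [Complex.zero_le_real, sub_nonneg, hc, one_div]
  exact inv_anti₀ hlm (lamMin_le hW.1 i)

lemma det_re_pos {m : ℕ} {B : Matrix (Fin m) (Fin m) ℂ} (hB : B.PosDef) :
    0 < B.det.re ∧ B.det = ((B.det.re : ℝ) : ℂ) := by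
  have h := hB.det_pos
  obtain ⟨h1, h2⟩ := Complex.lt_def.mp h
  exact ⟨h1, (Complex.ext (by simp) (by simp [← h2])).symm⟩

lemma logdet_bound {m : ℕ} {B : Matrix (Fin m) (Fin m) ℂ} (hB : B.PosDef) (d : Fin m → ℝ)
    (hd : ∀ i, 0 < d i) :
    Real.log B.det.re ≤ ∑ i, Real.log (d i) + ∑ i, ((B i i).re - d i) / d i := by
  obtain ⟨hbre, hbdet⟩ := det_re_pos hB
  set s : Fin m → ℝ := fun i => (Real.sqrt (d i))⁻¹ with hs_def
  have hs : ∀ i, 0 < s i := fun i => inv_pos.mpr (Real.sqrt_pos.mpr (hd i))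
  have hss : ∀ i, s i * s i = (d i)⁻¹ := fun i => by
    rw [hs_def, ← mul_inv, Real.mul_self_sqrt (hd i).le]
  set Dh := diagonal (fun i : Fin m => ((s i : ℝ) : ℂ)) with hDh
  set M := Dh * B * Dh with hM
  have hDhH : Dhᴴ = Dh := by
    ext i j
    by_cases h : i = j
    · subst h; simp [hDh]
    · simp [hDh, diagonal_apply_ne, h, Ne.symm h]
  have hMpsd : M.PosSemidef := by
    have := hB.posSemidef.mul_mul_conjTranspose_same Dh
    rwa [hDhH] at this
  have hDhdet : Dh.det = ((∏ i, s i : ℝ) : ℂ) := by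
    rw [hDh, det_diagonal]; push_cast; rfl
  have hprod : (∏ i, s i) * B.det.re * (∏ i, s i) = (∏ i, (d i)⁻¹) * B.det.re := by
    rw [show ∏ i, (d i)⁻¹ = (∏ i, s i) * ∏ i, s i by
      rw [← Finset.prod_mul_distrib]; exact Finset.prod_congr rfl fun i _ => (hss i).symm]
    ring
  have hMdet : M.det = (((∏ i, (d i)⁻¹) * B.det.re : ℝ) : ℂ) := by
    rw [hM, det_mul, det_mul, hDhdet]
    nth_rewrite 1 [hbdet]
    exact_mod_cast congrArg (fun r : ℝ => (r : ℂ)) hprod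
  have hMdet_ne : M.det ≠ 0 := by
    rw [hMdet]
    exact_mod_cast (mul_pos (Finset.prod_pos fun i _ => inv_pos.mpr (hd i)) hbre).ne'
  have hMpd : M.PosDef := posDef_of_psd_det hMpsd hMdet_ne
  have htr : M.trace.re = ∑ i, (d i)⁻¹ * (B i i).re := by
    rw [trace]
    rw [Complex.re_sum]
    refine Finset.sum_congr rfl fun i _ => ?_
    have h1 : M.diag i = (s i : ℂ) * B i i * (s i : ℂ) := by
      simp [hM, hDh, diag, diagonal_mul, mul_diagonal, mul_comm]
    rw [h1]
    have h2 : ((s i : ℂ) * B i i * (s i : ℂ)).re = s i * (B i i).re * s i := by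
      simp [Complex.mul_re]
      try ring
    rw [h2, ← hss i]
    ring
  have hkey := logdet_le hMpd
  rw [hMdet, Complex.ofReal_re, htr] at hkey
  rw [Real.log_mul (Finset.prod_pos fun i _ => inv_pos.mpr (hd i)).ne' hbre.ne',
    Real.log_prod (fun i _ => (inv_pos.mpr (hd i)).ne')] at hkey
  simp_rw [Real.log_inv] at hkey
  have hsum : ∑ i, ((B i i).re - d i) / d i = ∑ i, (d i)⁻¹ * (B i i).re - m := by
    rw [show ((m : ℕ) : ℝ) = ∑ _i : Fin m, (1 : ℝ) by simp, ← Finset.sum_sub_distrib]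
    refine Finset.sum_congr rfl fun i _ => ?_
    rw [sub_div, div_self (hd i).ne']
    ring
  have hneg : ∑ x, -Real.log (d x) = -∑ x, Real.log (d x) := by
    rw [Finset.sum_neg_distrib]
  rw [hsum]
  linarith


lemma Rstar_eq {m : ℕ} {W : Matrix (Fin m) (Fin m) ℂ} (hW : W.PosDef) (P lam : ℝ) :
    Rstar W P lam = diagonal (fun i : Fin m =>
      (((if lam = 0 then P else min P (1 / lam - (W⁻¹ i i).re)) + (W⁻¹ i i).re : ℝ) : ℂ)) - W⁻¹ := by
  ext i j
  by_cases h : i = j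
  · subst h
    simp only [Rstar, if_pos rfl, Matrix.sub_apply, diagonal_apply_eq]
    have hx : W⁻¹ i i = ((W⁻¹ i i).re : ℂ) := herm_diag_real hW.inv.1 i
    push_cast
    rw [← hx]
    ring
  · simp [Rstar, h, diagonal_apply_ne _ h]

/-- Full-rank optimal covariance under the joint total and per-antenna power constraints. -/
theorem stmt0 (m : ℕ) (hm : 1 ≤ m) (W : Matrix (Fin m) (Fin m) ℂ) (hW : W.PosDef)
    (P PT : ℝ) (hP : 0 < P) (hPT : 0 < PT)
    (hPlow : 1 / lamMin hW.1 < P)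
    (hPTlow : m / lamMin hW.1 - (W⁻¹).trace.re < PT)
    (lam : ℝ) (hlam0 : 0 ≤ lam)
    (hlam1 : m * P ≤ PT → lam = 0)
    (hlam2 : PT < m * P → 0 < lam ∧ ∑ i, min P (1 / lam - (W⁻¹ i i).re) = PT) :
    (Rstar W P lam).PosDef ∧ Rstar W P lam ∈ jointSet m PT P ∧
      ∀ R ∈ jointSet m PT P, mutualInfo W R ≤ mutualInfo W (Rstar W P lam) := by
  have hm0 : 0 < m := hm
  have hA : (W⁻¹).PosDef := hW.inv
  set A := W⁻¹ with hAdef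
  set a : Fin m → ℝ := fun i => (A i i).re with ha_def
  have ha_pos : ∀ i, 0 < a i := fun i => posdef_diag_pos hA i
  have haC : ∀ i, A i i = ((a i : ℝ) : ℂ) := fun i => herm_diag_real hA.1 i
  set c : ℝ := 1 / lamMin hW.1 with hc_def
  have hlm := lamMin_pos hm0 hW
  have hc_pos : 0 < c := by positivity
  set r : Fin m → ℝ := fun i => if lam = 0 then P else min P (1 / lam - a i) with hr_def
  set d : Fin m → ℝ := fun i => r i + a i with hd_def
  have htrA : A.trace.re = ∑ i, a i := by
    rw [trace, Complex.re_sum]; rfl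
  -- case analysis facts
  have hcases : (lam = 0 ∧ (m : ℝ) * P ≤ PT) ∨
      (0 < lam ∧ (∑ i, min P (1 / lam - a i)) = PT ∧ c < 1 / lam) := by
    by_cases hl : lam = 0
    · left
      refine ⟨hl, ?_⟩
      by_contra h
      push_neg at h
      have := (hlam2 h).1
      rw [hl] at this
      exact lt_irrefl 0 this
    · right
      have hmp : PT < m * P := by
        by_contra h
        push_neg at h
        exact hl (hlam1 h)
      obtain ⟨hlp, hsum⟩ := hlam2 hmp
      refine ⟨hlp, hsum, ?_⟩
      have h1 : PT ≤ ∑ i, (1 / lam - a i) := by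
        rw [← hsum]
        exact Finset.sum_le_sum fun i _ => min_le_right _ _
      rw [Finset.sum_sub_distrib, Finset.sum_const, Finset.card_univ, Fintype.card_fin] at h1
      have h2 : (m : ℝ) * c - ∑ i, a i < PT := by
        rw [hc_def, ← htrA]
        calc (m:ℝ) * (1 / lamMin hW.1) - A.trace.re = (m:ℝ) / lamMin hW.1 - A.trace.re := by
              ring
          _ < PT := hPTlow
      have h3 : (m : ℝ) * c < m * (1 / lam) := by
        have := h2.trans_le h1
        have hsm : (m : ℕ) • (1 / lam) = (m : ℝ) * (1 / lam) := by
          rw [nsmul_eq_mul]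
        linarith [hsm ▸ this]
      have hm' : (0:ℝ) < m := by exact_mod_cast hm0
      exact lt_of_mul_lt_mul_left h3 hm'.le
  have hd_gt : ∀ i, c < d i := by
    intro i
    rcases hcases with ⟨hl, _⟩ | ⟨hlp, _, hcl⟩
    · have : d i = P + a i := by rw [hd_def, hr_def]; simp [hl]
      rw [this]
      have := ha_pos i
      rw [hc_def] at *
      linarith [hPlow]
    · have hlne : lam ≠ 0 := hlp.ne'
      have : d i = min (P + a i) (1 / lam) := by
        rw [hd_def, hr_def]
        simp only [hlne, if_false]
        rcases le_total P (1 / lam - a i) with h | h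
        · rw [min_eq_left h, min_eq_left (by linarith)]
        · rw [min_eq_right h, min_eq_right (by linarith)]
          ring
      rw [this]
      apply lt_min
      · have := ha_pos i
        rw [hc_def] at *
        linarith [hPlow]
      · exact hcl
  have hd_pos : ∀ i, 0 < d i := fun i => hc_pos.trans (hd_gt i)
  -- structural identity
  have hRseq : Rstar W P lam = diagonal (fun i : Fin m => ((d i : ℝ) : ℂ)) - A := by
    rw [Rstar_eq hW P lam]
  have hsumR : A + Rstar W P lam = diagonal (fun i : Fin m => ((d i : ℝ) : ℂ)) := by
    rw [hRseq]
    abel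
  -- positive definiteness
  have hDpd : (diagonal (fun i : Fin m => ((d i : ℝ) : ℂ)) - A).PosDef := by
    have hsplit : diagonal (fun i : Fin m => ((d i : ℝ) : ℂ)) - A
        = diagonal (fun i : Fin m => ((d i - c : ℝ) : ℂ))
          + (diagonal (fun _ : Fin m => ((c : ℝ) : ℂ)) - A) := by
      ext i j
      by_cases h : i = j
      · subst h
        simp only [Matrix.sub_apply, Matrix.add_apply, diagonal_apply_eq]
        push_cast
        ring
      · simp [diagonal_apply_ne _ h]
    rw [hsplit]
    exact (posDef_diagonal_iff.mpr fun i =>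
      Complex.zero_lt_real.mpr (by linarith [hd_gt i])).add_posSemidef (psd_c_sub_inv hm0 hW)
  have hRpd : (Rstar W P lam).PosDef := by rw [hRseq]; exact hDpd
  -- diagonal entries of Rstar
  have hRdiageq : ∀ i, Rstar W P lam i i = ((r i : ℝ) : ℂ) := by
    intro i
    rw [hRseq]
    simp only [Matrix.sub_apply, diagonal_apply_eq]
    rw [haC i]
    norm_cast
    show r i + a i - a i = r i
    ring
  -- sum of r
  have hrsum : ∑ i, r i ≤ PT ∧ (0 < lam → ∑ i, r i = PT) := by
    rcases hcases with ⟨hl, hmp⟩ | ⟨hlp, hsum, _⟩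
    · constructor
      · have : ∑ i, r i = m * P := by
          simp [hr_def, hl, Finset.sum_const, Finset.card_univ, mul_comm]
        rw [this]; exact hmp
      · intro h; rw [hl] at h; exact absurd h (lt_irrefl 0)
    · have : ∑ i, r i = PT := by
        rw [← hsum]
        exact Finset.sum_congr rfl fun i _ => by simp [hr_def, hlp.ne']
      exact ⟨this.le, fun _ => this⟩
  -- membership
  have htrRs : (Rstar W P lam).trace.re = ∑ i, r i := by
    rw [trace, Complex.re_sum]
    refine Finset.sum_congr rfl fun i _ => ?_
    rw [show (Rstar W P lam).diag i = Rstar W P lam i i from rfl, hRdiageq i, Complex.ofReal_re]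
  have hmem : Rstar W P lam ∈ jointSet m PT P := by
    refine ⟨hRpd.posSemidef, ?_, ?_⟩
    · rw [htrRs]; exact hrsum.1
    · intro i
      rw [hRdiageq i, Complex.ofReal_re, hr_def]
      by_cases hl : lam = 0
      · simp [hl]
      · simp only [hl, if_false]
        exact min_le_left _ _
  refine ⟨hRpd, hmem, ?_⟩
  -- optimality
  intro R hR
  obtain ⟨hRpsd, hRtr, hRd⟩ := hR
  have hWdet := det_re_pos hW
  have hfact : ∀ S : Matrix (Fin m) (Fin m) ℂ, (1 : Matrix (Fin m) (Fin m) ℂ) + W * S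
      = W * (A + S) := by
    intro S
    rw [mul_add, hAdef, Matrix.mul_nonsing_inv W hW.det_pos.ne'.isUnit]
  have hMI : ∀ S : Matrix (Fin m) (Fin m) ℂ, (A + S).PosDef →
      mutualInfo W S = Real.log W.det.re + Real.log (A + S).det.re := by
    intro S hS
    obtain ⟨hb, hbd⟩ := det_re_pos hS
    have hdd : W.det * (A + S).det = ((W.det.re * (A + S).det.re : ℝ) : ℂ) := by
      rw [hWdet.2, hbd]
      push_cast
      simp
    rw [mutualInfo, hfact S, det_mul, hdd, Complex.ofReal_re,
      Real.log_mul hWdet.1.ne' hb.ne']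
  have hBpd : (A + R).PosDef := hA.add_posSemidef hRpsd
  have hDdiagpd : (A + Rstar W P lam).PosDef := by
    rw [hsumR]
    exact posDef_diagonal_iff.mpr fun i => Complex.zero_lt_real.mpr (hd_pos i)
  have hMIstar : mutualInfo W (Rstar W P lam) = Real.log W.det.re + ∑ i, Real.log (d i) := by
    rw [hMI _ hDdiagpd]
    congr 1
    have hdet : (A + Rstar W P lam).det = ((∏ i, d i : ℝ) : ℂ) := by
      rw [hsumR, det_diagonal]
      push_cast
      rfl
    rw [hdet, Complex.ofReal_re, Real.log_prod fun i _ => (hd_pos i).ne']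
  rw [hMI R hBpd, hMIstar]
  have hlog := logdet_bound hBpd d hd_pos
  have hterm : ∀ i, ((A + R) i i).re = a i + (R i i).re := by
    intro i
    rw [Matrix.add_apply, Complex.add_re]
  have htRsum : ∑ i, (R i i).re = R.trace.re := by
    rw [trace, Complex.re_sum]; rfl
  have htsum : ∑ i, (((A + R) i i).re - d i) / d i ≤ 0 := by
    rcases hcases with ⟨hl, hmp⟩ | ⟨hlp, hsum, hcl⟩
    · apply Finset.sum_nonpos
      intro i _
      apply div_nonpos_of_nonpos_of_nonneg _ (hd_pos i).le
      rw [hterm i]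
      have hdi : d i = P + a i := by
        show r i + a i = P + a i
        simp [hr_def, hl]
      rw [hdi]
      linarith [hRd i]
    · calc ∑ i, (((A + R) i i).re - d i) / d i ≤ ∑ i, lam * ((R i i).re - r i) := by
            refine Finset.sum_le_sum fun i _ => ?_
            rw [hterm i]
            have hnum : a i + (R i i).re - d i = (R i i).re - r i := by
              show a i + (R i i).re - (r i + a i) = (R i i).re - r i
              ring
            rw [hnum]
            rcases le_or_gt (1 / lam) (P + a i) with h | h
            · have hdi : d i = 1 / lam := by
                show r i + a i = 1 / lam
                simp only [hr_def, hlp.ne', if_false]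
                rw [min_eq_right (by linarith)]
                ring
              rw [hdi, div_div_eq_mul_div, div_one, mul_comm]
            · have hri : r i = P := by
                simp only [hr_def, hlp.ne', if_false]
                exact min_eq_left (by linarith)
              have hdi : d i = P + a i := by
                show r i + a i = P + a i
                rw [hri]
              have ht : (R i i).re - r i ≤ 0 := by rw [hri]; linarith [hRd i]
              have hdub : d i ≤ 1 / lam := by rw [hdi]; linarith
              have h1d : lam ≤ 1 / d i := by
                rw [show lam = 1 / (1 / lam) by field_simp]
                exact one_div_le_one_div_of_le (hd_pos i) hdub
              calc ((R i i).re - r i) / d i = ((R i i).re - r i) * (1 / d i) := by ring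
                _ ≤ ((R i i).re - r i) * lam := mul_le_mul_of_nonpos_left h1d ht
                _ = lam * ((R i i).re - r i) := by ring
        _ = lam * (∑ i, (R i i).re - ∑ i, r i) := by
            rw [← Finset.mul_sum, Finset.sum_sub_distrib]
        _ ≤ 0 := by
            apply mul_nonpos_of_nonneg_of_nonpos hlp.le
            rw [htRsum, hrsum.2 hlp]
            linarith
  linarith [hlog, htsum]
end

section
/- Let W be an m×m complex Hermitian positive definite matrix and let P, P_T > 0 satisfy P > 1/λ_min(W) and P_T > m/λ_min(W) − tr(W⁻¹), and let λ ≥ 0 be as in the full-rank solution (λ = 0 if m·P ≤ P_T, otherwise the solution of Σᵢ min(P, 1/λ − (W⁻¹)ᵢᵢ) = P_T). Then the capacity under the joint constraints equals C_joint(P_T, P) = log det(W) + Σᵢ log min(1/λ, P + (W⁻¹)ᵢᵢ) (interpreting min(1/λ, ·) as P + (W⁻¹)ᵢᵢ when λ = 0). -/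
open Matrix ComplexOrder

/-- Capacity under the joint constraints. -/
noncomputable def Cjoint (m : ℕ) (W : Matrix (Fin m) (Fin m) ℂ) (PT P : ℝ) : ℝ :=
  sSup (mutualInfo W '' jointSet m PT P)


lemma amgm_prod_le_one {n : ℕ} (hn : 1 ≤ n) (ν : Fin n → ℝ) (hν : ∀ i, 0 ≤ ν i)
    (hsum : ∑ i, ν i = n) : ∏ i, ν i ≤ 1 := by
  have hn0 : (0:ℝ) < n := by exact_mod_cast hn
  have key := Real.geom_mean_le_arith_mean_weighted Finset.univ (fun _ => (n:ℝ)⁻¹) ν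
    (fun i _ => by positivity) (by simp [Finset.card_univ]; field_simp) (fun i _ => hν i)
  rw [Real.finset_prod_rpow _ _ (fun i _ => hν i)] at key
  have hr : ∑ i, (n:ℝ)⁻¹ * ν i = 1 := by
    rw [← Finset.mul_sum, hsum]; field_simp
  rw [hr] at key
  by_contra h
  push_neg at h
  have := Real.one_lt_rpow_iff_of_pos (lt_trans one_pos h) (y := (n:ℝ)⁻¹)
  have h2 : 1 < (∏ i, ν i) ^ ((n:ℝ)⁻¹) := this.mpr (Or.inl ⟨h, by positivity⟩)
  linarith

lemma trace_eq_sum_eigs_s1 {n : ℕ} {A : Matrix (Fin n) (Fin n) ℂ} (hA : A.IsHermitian) :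
    A.trace = ((∑ i, hA.eigenvalues i : ℝ) : ℂ) := by
  rw [hA.trace_eq_sum_eigenvalues, Complex.ofReal_sum]
  exact Finset.sum_congr rfl fun i _ => rfl

lemma diag_re_pos {n : ℕ} {A : Matrix (Fin n) (Fin n) ℂ} (hA : A.PosDef) (i : Fin n) :
    0 < (A i i).re := by
  have h := hA.re_dotProduct_pos (x := Pi.single i 1) (by
    intro h; simpa using congrFun h i)
  simpa [dotProduct, mulVec, Pi.single_apply, Finset.sum_ite_eq, Finset.sum_ite_eq'] using h

lemma diag_re_nonneg {n : ℕ} {A : Matrix (Fin n) (Fin n) ℂ} (hA : A.PosSemidef) (i : Fin n) :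
    0 ≤ (A i i).re := by
  have h := hA.re_dotProduct_nonneg (Pi.single i 1)
  simpa [dotProduct, mulVec, Pi.single_apply, Finset.sum_ite_eq, Finset.sum_ite_eq'] using h

lemma herm_diag_eq {n : ℕ} {A : Matrix (Fin n) (Fin n) ℂ} (hA : A.IsHermitian) (i : Fin n) :
    A i i = ((A i i).re : ℂ) := by
  have := hA.coe_re_apply_self i
  simpa using this.symm

lemma hadamard_ineq {n : ℕ} {A : Matrix (Fin n) (Fin n) ℂ} (hA : A.PosDef) :
    A.det.re ≤ ∏ i, (A i i).re := by
  rcases Nat.eq_zero_or_pos n with hn | hn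
  · subst hn; simp
  set a : Fin n → ℝ := fun i => (A i i).re with ha
  have hap : ∀ i, 0 < a i := diag_re_pos hA
  set c : Fin n → ℂ := fun i => (((Real.sqrt (a i))⁻¹ : ℝ) : ℂ) with hc
  set C : Matrix (Fin n) (Fin n) ℂ := diagonal c with hC
  have hsc : star c = c := by
    funext i
    simp [hc, star_inv₀, Complex.conj_ofReal]
  have hCH : Cᴴ = C := by
    rw [hC, diagonal_conjTranspose, hsc]
  have hBpsd : (Cᴴ * A * C).PosSemidef := hA.posSemidef.conjTranspose_mul_mul_same C
  set B := Cᴴ * A * C with hB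
  have hBH := hBpsd.isHermitian
  set ν := hBH.eigenvalues with hν
  have hBdiag : ∀ i, B i i = 1 := by
    intro i
    have h1 : B i i = c i * A i i * c i := by
      rw [hB, hCH, hC, Matrix.mul_diagonal, Matrix.diagonal_mul]
    have h2 : (Real.sqrt (a i))⁻¹ * a i * (Real.sqrt (a i))⁻¹ = 1 := by
      rw [← Real.mul_self_sqrt (hap i).le]
      have := Real.sqrt_pos.mpr (hap i)
      field_simp
      rw [Real.sqrt_sq this.le]
    have h3 : ((Real.sqrt (a i))⁻¹)^2 * a i = 1 := by linear_combination h2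
    have hae : (A i i).re = a i := rfl
    rw [h1, herm_diag_eq hA.1 i, hc]
    push_cast
    rw [hae]
    exact_mod_cast h2
  have htr : B.trace = (n : ℂ) := by
    rw [Matrix.trace]
    simp [Matrix.diag, hBdiag]
  have hsum : ∑ i, ν i = n := by
    have h := trace_eq_sum_eigs_s1 hBH
    rw [htr] at h
    exact_mod_cast h.symm
  have hnu0 : ∀ i, 0 ≤ ν i := hBpsd.eigenvalues_nonneg
  have hprodν : ∏ i, ν i ≤ 1 := amgm_prod_le_one hn ν hnu0 hsum
  have hdetB : B.det = ((∏ i, ν i : ℝ) : ℂ) := by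
    rw [hBH.det_eq_prod_eigenvalues]
    norm_cast
  set t : ℝ := ∏ i, (Real.sqrt (a i))⁻¹ with ht
  have htpos : 0 < t := Finset.prod_pos (fun i _ => inv_pos.mpr (Real.sqrt_pos.mpr (hap i)))
  have hdetC : C.det = (t : ℂ) := by
    rw [hC, det_diagonal, hc, ht]
    push_cast
    rfl
  have hdet2 : B.det = ((t * t : ℝ) : ℂ) * A.det := by
    rw [hB, det_mul, det_mul, hCH, hdetC]
    push_cast
    ring
  have htt : t * t = (∏ i, a i)⁻¹ := by
    rw [ht, ← Finset.prod_mul_distrib, ← Finset.prod_inv_distrib]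
    refine Finset.prod_congr rfl fun i _ => ?_
    rw [← mul_inv, Real.mul_self_sqrt (hap i).le]
  have hre : ∏ i, ν i = t * t * A.det.re := by
    have h := congrArg Complex.re hdet2
    rw [hdetB, Complex.ofReal_re, Complex.re_ofReal_mul] at h
    exact h
  have hpa : 0 < ∏ i, a i := Finset.prod_pos (fun i _ => hap i)
  rw [htt] at hre
  have hAre : A.det.re = (∏ i, a i) * (∏ i, ν i) := by
    field_simp at hre
    linarith [hre]
  rw [hAre]
  nlinarith [hpa, hprodν]


lemma smul_one_sub_inv_psd {n : ℕ} {W : Matrix (Fin n) (Fin n) ℂ} (hW : W.PosDef)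
    {c : ℝ} (hc : ∀ i, (hW.1.eigenvalues i)⁻¹ ≤ c) :
    ((c : ℂ) • (1 : Matrix (Fin n) (Fin n) ℂ) - W⁻¹).PosSemidef := by
  set U : Matrix (Fin n) (Fin n) ℂ := (hW.1.eigenvectorUnitary : Matrix (Fin n) (Fin n) ℂ) with hU
  set μ := hW.1.eigenvalues with hμ
  have hμpos : ∀ i, 0 < μ i := hW.eigenvalues_pos
  have hUU : U * star U = 1 := mem_unitaryGroup_iff.mp (hW.1.eigenvectorUnitary).2
  have hU'U : star U * U = 1 := mem_unitaryGroup_iff'.mp (hW.1.eigenvectorUnitary).2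
  set D : Matrix (Fin n) (Fin n) ℂ := diagonal (RCLike.ofReal ∘ μ) with hD
  set E : Matrix (Fin n) (Fin n) ℂ := diagonal (fun i => ((μ i)⁻¹ : ℝ)) with hE
  have hsp : W = U * D * star U := hW.1.spectral_theorem
  have hWinv : W⁻¹ = U * E * star U := by
    apply inv_eq_right_inv
    conv_lhs => rw [hsp]
    simp only [Matrix.mul_assoc]
    rw [← Matrix.mul_assoc (star U) U, hU'U, Matrix.one_mul,
      ← Matrix.mul_assoc D E, hD, hE, diagonal_mul_diagonal]
    have : (fun i => (RCLike.ofReal ∘ μ) i * (((μ i)⁻¹ : ℝ) : ℂ)) = fun _ => (1:ℂ) := by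
      funext i
      simp only [Function.comp_apply, RCLike.ofReal_mul]
      push_cast
      exact mul_inv_cancel₀ (Complex.ofReal_ne_zero.mpr (hμpos i).ne')
    rw [this, diagonal_one, Matrix.one_mul, hUU]
  have key : (c : ℂ) • (1 : Matrix (Fin n) (Fin n) ℂ) - W⁻¹
      = U * diagonal (fun i => ((c - (μ i)⁻¹ : ℝ) : ℂ)) * star U := by
    have hdiag : diagonal (fun i => ((c - (μ i)⁻¹ : ℝ) : ℂ))
        = (c : ℂ) • (1 : Matrix (Fin n) (Fin n) ℂ) - E := by
      ext i j
      rcases eq_or_ne i j with h | h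
      · subst h
        simp only [hE, diagonal_apply_eq, Matrix.sub_apply, Matrix.smul_apply,
          Matrix.one_apply_eq, smul_eq_mul, mul_one]
        push_cast
        ring
      · simp [hE, diagonal_apply_ne _ h, Matrix.one_apply_ne h]
    rw [hdiag, Matrix.mul_sub, Matrix.sub_mul, ← hWinv]
    congr 1
    rw [Matrix.mul_smul, Matrix.smul_mul, Matrix.mul_one, hUU]
  rw [key, Matrix.star_eq_conjTranspose U]
  refine Matrix.PosSemidef.mul_mul_conjTranspose_same ?_ U
  apply Matrix.PosSemidef.diagonal
  intro i
  simp only [Pi.zero_apply]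
  rw [Complex.zero_le_real]
  exact sub_nonneg.mpr (hc i)


lemma sum_log_le_key {m : ℕ} {P PT lam : ℝ} (hP : 0 < P) (hlam0 : 0 ≤ lam)
    (v r : Fin m → ℝ) (hv : ∀ i, 0 < v i) (hr0 : ∀ i, 0 ≤ r i) (hrP : ∀ i, r i ≤ P)
    (hrT : ∑ i, r i ≤ PT)
    (hlamT : lam ≠ 0 → ∑ i, min P (1/lam - v i) = PT) :
    ∑ i, Real.log (v i + r i) ≤
      ∑ i, Real.log (if lam = 0 then P + v i else min (1/lam) (P + v i)) := by
  set d : Fin m → ℝ := fun i => if lam = 0 then P + v i else min (1/lam) (P + v i) with hd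
  have hlaminv : lam ≠ 0 → 0 < 1/lam := fun h => by positivity
  have hd0 : ∀ i, 0 < d i := by
    intro i
    rw [hd]
    dsimp only
    split_ifs with h
    · linarith [hv i]
    · exact lt_min (hlaminv h) (by linarith [hv i])
  have hx0 : ∀ i, 0 < v i + r i := fun i => by linarith [hv i, hr0 i]
  have step : ∀ i, Real.log (v i + r i) ≤ Real.log (d i) + (v i + r i - d i) / d i := by
    intro i
    have h1 := Real.log_le_sub_one_of_pos (div_pos (hx0 i) (hd0 i))
    rw [Real.log_div (hx0 i).ne' (hd0 i).ne'] at h1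
    have h2 : (v i + r i - d i) / d i = (v i + r i) / d i - 1 := by
      rw [sub_div, div_self (hd0 i).ne']
    rw [h2]
    linarith
  have hsum_nonpos : ∑ i, (v i + r i - d i) / d i ≤ 0 := by
    by_cases hl : lam = 0
    · apply Finset.sum_nonpos
      intro i _
      apply div_nonpos_of_nonpos_of_nonneg _ (hd0 i).le
      have : d i = P + v i := by rw [hd]; simp [hl]
      rw [this]
      linarith [hrP i]
    · have hlp : 0 < lam := lt_of_le_of_ne hlam0 (Ne.symm hl)
      have hterm : ∀ i, (v i + r i - d i) / d i ≤ lam * (v i + r i - d i) := by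
        intro i
        have hdi : d i = min (1/lam) (P + v i) := by rw [hd]; simp [hl]
        rcases le_or_gt (1/lam) (P + v i) with h | h
        · have hde : d i = 1/lam := by rw [hdi, min_eq_left h]
          rw [hde, one_div, div_eq_mul_inv, inv_inv]
          apply le_of_eq
          ring
        · have hdip : d i = P + v i := by rw [hdi, min_eq_right h.le]
          have hx : v i + r i - d i ≤ 0 := by rw [hdip]; linarith [hrP i]
          have hinv : lam ≤ (d i)⁻¹ := by
            rw [← one_div]
            rw [le_div_iff₀ (hd0 i)]
            calc lam * d i ≤ lam * (1/lam) := by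
                  apply mul_le_mul_of_nonneg_left _ hlam0
                  rw [hdip]; exact h.le
              _ = 1 := by field_simp
          calc (v i + r i - d i) / d i = (v i + r i - d i) * (d i)⁻¹ := div_eq_mul_inv _ _
            _ ≤ (v i + r i - d i) * lam := mul_le_mul_of_nonpos_left hinv hx
            _ = lam * (v i + r i - d i) := mul_comm _ _
      have hsumd : ∑ i, d i = (∑ i, v i) + PT := by
        rw [← hlamT hl, ← Finset.sum_add_distrib]
        refine Finset.sum_congr rfl fun i _ => ?_
        rw [hd]
        dsimp only
        rw [if_neg hl]
        rcases le_total (1/lam) (P + v i) with h | h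
        · rw [min_eq_left h, min_eq_right (by linarith : 1/lam - v i ≤ P)]
          ring
        · rw [min_eq_right h, min_eq_left (by linarith : P ≤ 1/lam - v i)]
          ring
      calc ∑ i, (v i + r i - d i) / d i ≤ ∑ i, lam * (v i + r i - d i) :=
            Finset.sum_le_sum (fun i _ => hterm i)
        _ = lam * ((∑ i, v i) + (∑ i, r i) - ∑ i, d i) := by
            rw [← Finset.mul_sum]
            congr 1
            rw [Finset.sum_sub_distrib, Finset.sum_add_distrib]
        _ = lam * ((∑ i, r i) - PT) := by rw [hsumd]; ring_nf
        _ ≤ 0 := mul_nonpos_of_nonneg_of_nonpos hlp.le (by linarith)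
  calc ∑ i, Real.log (v i + r i) ≤ ∑ i, (Real.log (d i) + (v i + r i - d i) / d i) :=
        Finset.sum_le_sum (fun i _ => step i)
    _ = ∑ i, Real.log (d i) + ∑ i, (v i + r i - d i) / d i := Finset.sum_add_distrib
    _ ≤ ∑ i, Real.log (d i) := by linarith [hsum_nonpos]



/-- The capacity under the joint constraints in the full-rank regime:
`C = log det W + Σᵢ log min(1/λ, P + (W⁻¹)ᵢᵢ)`, where `min(1/λ, ·)` is read as
`P + (W⁻¹)ᵢᵢ` when `λ = 0`. -/
theorem stmt1 (m : ℕ) (hm : 1 ≤ m) (W : Matrix (Fin m) (Fin m) ℂ) (hW : W.PosDef)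
    (P PT : ℝ) (hP : 0 < P) (hPT : 0 < PT)
    (hPlow : 1 / lamMin hW.1 < P)
    (hPTlow : m / lamMin hW.1 - (W⁻¹).trace.re < PT)
    (lam : ℝ) (hlam0 : 0 ≤ lam)
    (hlam1 : m * P ≤ PT → lam = 0)
    (hlam2 : PT < m * P → 0 < lam ∧ ∑ i, min P (1 / lam - (W⁻¹ i i).re) = PT) :
    Cjoint m W PT P =
      Real.log W.det.re +
        ∑ i, Real.log (if lam = 0 then P + (W⁻¹ i i).re
          else min (1 / lam) (P + (W⁻¹ i i).re)) := by
  classical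
  have hm0 : 0 < m := hm
  set μ := hW.1.eigenvalues with hμ
  have hμpos : ∀ i, 0 < μ i := hW.eigenvalues_pos
  have hfin : (Set.range μ).Finite := Set.finite_range μ
  have hne : (Set.range μ).Nonempty := ⟨μ ⟨0, hm0⟩, ⟨0, hm0⟩, rfl⟩
  have hmemInf : lamMin hW.1 ∈ Set.range μ := hne.csInf_mem hfin
  obtain ⟨i0, hi0⟩ := hmemInf
  have hlmin_pos : 0 < lamMin hW.1 := hi0 ▸ hμpos i0
  have hlmin_le : ∀ i, lamMin hW.1 ≤ μ i := fun i => csInf_le hfin.bddBelow ⟨i, rfl⟩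
  set c : ℝ := (lamMin hW.1)⁻¹ with hc
  have hcpos : 0 < c := inv_pos.mpr hlmin_pos
  have hcP : c < P := by rw [hc, ← one_div]; exact hPlow
  have hWinvPD : (W⁻¹).PosDef := hW.inv
  set v : Fin m → ℝ := fun i => (W⁻¹ i i).re with hv
  have hvpos : ∀ i, 0 < v i := fun i => diag_re_pos hWinvPD i
  have htr : (W⁻¹).trace.re = ∑ i, v i := by
    rw [Matrix.trace, Complex.re_sum]
    rfl
  set d : Fin m → ℝ := fun i =>
    if lam = 0 then P + v i else min (1 / lam) (P + v i) with hd
  -- facts about lam in the nonzero case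
  have hlamfacts : lam ≠ 0 → 0 < lam ∧ (∑ i, min P (1 / lam - v i) = PT) ∧ c < 1 / lam := by
    intro hl
    have hPTm : PT < m * P := by
      by_contra hcon
      exact hl (hlam1 (le_of_not_gt hcon))
    obtain ⟨hlp, hsum⟩ := hlam2 hPTm
    refine ⟨hlp, hsum, ?_⟩
    have h1 : ∑ i, min P (1 / lam - v i) ≤ ∑ i, (1 / lam - v i) :=
      Finset.sum_le_sum fun i _ => min_le_right _ _
    have h2 : ∑ i, (1 / lam - v i) = m * (1 / lam) - ∑ i, v i := by
      rw [Finset.sum_sub_distrib, Finset.sum_const, Finset.card_univ, Fintype.card_fin,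
        nsmul_eq_mul]
    have h3 : (m : ℝ) / lamMin hW.1 = m * c := by rw [hc, div_eq_mul_inv]
    rw [h3, htr] at hPTlow
    rw [hsum, h2] at h1
    have hmc : (m : ℝ) * c < m * (1 / lam) := by linarith
    have hm' : (0:ℝ) < m := by exact_mod_cast hm0
    exact lt_of_mul_lt_mul_left hmc hm'.le
  have hd0 : ∀ i, c < d i := by
    intro i
    rw [hd]
    dsimp only
    split_ifs with h
    · linarith [hvpos i]
    · exact lt_min (hlamfacts h).2.2 (by linarith [hvpos i])
  have hdpos : ∀ i, 0 < d i := fun i => lt_trans hcpos (hd0 i)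
  have hdub : ∀ i, d i ≤ P + v i := by
    intro i
    rw [hd]
    dsimp only
    split_ifs with h
    · exact le_refl _
    · exact min_le_right _ _
  -- sum of d - v
  have hsumdv : ∑ i, (d i - v i) ≤ PT := by
    by_cases hl : lam = 0
    · have hdv : ∀ i, d i - v i = P := by
        intro i; rw [hd]; dsimp only; rw [if_pos hl]; ring
      rw [Finset.sum_congr rfl fun i _ => hdv i, Finset.sum_const, Finset.card_univ,
        Fintype.card_fin, nsmul_eq_mul]
      by_contra hcon
      push_neg at hcon
      exact (hlam2 hcon).1.ne' hl
    · obtain ⟨hlp, hsum, _⟩ := hlamfacts hl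
      have : ∀ i, d i - v i = min P (1 / lam - v i) := by
        intro i
        rw [hd]
        dsimp only
        rw [if_neg hl]
        rcases le_total (1 / lam) (P + v i) with h | h
        · rw [min_eq_left h, min_eq_right (by linarith : 1 / lam - v i ≤ P)]
        · rw [min_eq_right h, min_eq_left (by linarith : P ≤ 1 / lam - v i)]
          ring
      rw [Finset.sum_congr rfl fun i _ => this i, hsum]
  -- determinant splitting
  have hWdetpos : (0:ℂ) < W.det := hW.det_pos
  have hWre : 0 < W.det.re ∧ W.det.im = 0 := by
    rw [Complex.lt_def] at hWdetpos
    exact ⟨by simpa using hWdetpos.1, by simpa using hWdetpos.2.symm⟩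
  have hdet_split : ∀ R : Matrix (Fin m) (Fin m) ℂ, R.PosSemidef →
      mutualInfo W R = Real.log W.det.re + Real.log ((W⁻¹ + R).det.re)
        ∧ 0 < (W⁻¹ + R).det.re := by
    intro R hR
    have hX : (W⁻¹ + R).PosDef := hWinvPD.add_posSemidef hR
    have hXdetpos : (0:ℂ) < (W⁻¹ + R).det := hX.det_pos
    have hXre : 0 < (W⁻¹ + R).det.re ∧ (W⁻¹ + R).det.im = 0 := by
      rw [Complex.lt_def] at hXdetpos
      exact ⟨by simpa using hXdetpos.1, by simpa using hXdetpos.2.symm⟩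
    refine ⟨?_, hXre.1⟩
    have hiden : (1 : Matrix (Fin m) (Fin m) ℂ) + W * R = W * (W⁻¹ + R) := by
      rw [Matrix.mul_add, Matrix.mul_nonsing_inv _ (isUnit_iff_ne_zero.mpr hWdetpos.ne')]
    have hdet : (1 + W * R).det = W.det * (W⁻¹ + R).det := by rw [hiden, det_mul]
    have hre : (1 + W * R).det.re = W.det.re * (W⁻¹ + R).det.re := by
      rw [hdet, Complex.mul_re, hWre.2, hXre.2]
      ring
    rw [mutualInfo, hre, Real.log_mul hWre.1.ne' hXre.1.ne']
  -- upper bound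
  have hub : ∀ R ∈ jointSet m PT P,
      mutualInfo W R ≤ Real.log W.det.re + ∑ i, Real.log (d i) := by
    rintro R ⟨hR, hRtr, hRdiag⟩
    obtain ⟨hsplit, hXdetpos⟩ := hdet_split R hR
    rw [hsplit]
    have hX : (W⁻¹ + R).PosDef := hWinvPD.add_posSemidef hR
    have hXdiag : ∀ i, ((W⁻¹ + R) i i).re = v i + (R i i).re := by
      intro i
      rw [Matrix.add_apply, Complex.add_re]
    have hr0 : ∀ i, 0 ≤ (R i i).re := fun i => diag_re_nonneg hR i
    have hRtr' : ∑ i, (R i i).re ≤ PT := by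
      have : R.trace.re = ∑ i, (R i i).re := by
        rw [Matrix.trace, Complex.re_sum]; rfl
      linarith [this ▸ hRtr]
    have h1 : (W⁻¹ + R).det.re ≤ ∏ i, ((W⁻¹ + R) i i).re := hadamard_ineq hX
    have h2 : Real.log ((W⁻¹ + R).det.re) ≤ ∑ i, Real.log (v i + (R i i).re) := by
      calc Real.log ((W⁻¹ + R).det.re) ≤ Real.log (∏ i, ((W⁻¹ + R) i i).re) :=
            Real.log_le_log hXdetpos h1
        _ = Real.log (∏ i, (v i + (R i i).re)) := by
            rw [Finset.prod_congr rfl fun i _ => hXdiag i]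
        _ = ∑ i, Real.log (v i + (R i i).re) := by
            rw [Real.log_prod]
            intro i _
            have := hvpos i
            have := hr0 i
            positivity
    have h3 : ∑ i, Real.log (v i + (R i i).re) ≤ ∑ i, Real.log (d i) := by
      have key := sum_log_le_key hP hlam0 v (fun i => (R i i).re) hvpos hr0 hRdiag hRtr'
        (fun hl => (hlamfacts hl).2.1)
      rw [hd]
      exact key
    linarith
  -- the optimal matrix
  have hcineq : ∀ i, (μ i)⁻¹ ≤ c := by
    intro i
    rw [hc]
    exact inv_anti₀ hlmin_pos (hlmin_le i)
  set Rstar : Matrix (Fin m) (Fin m) ℂ := diagonal (fun i => ((d i : ℝ) : ℂ)) - W⁻¹ with hRs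
  have hXRs : W⁻¹ + Rstar = diagonal (fun i => ((d i : ℝ) : ℂ)) := by rw [hRs]; abel
  have hRsPSD : Rstar.PosSemidef := by
    have h1 : Rstar = diagonal (fun i => ((d i - c : ℝ) : ℂ)) + ((c:ℂ) • 1 - W⁻¹) := by
      rw [hRs]
      have h2 : diagonal (fun i => ((d i : ℝ) : ℂ))
          = diagonal (fun i => ((d i - c : ℝ) : ℂ)) + (c:ℂ) • 1 := by
        ext i j
        rcases eq_or_ne i j with h | h
        · subst h
          simp only [diagonal_apply_eq, Matrix.add_apply, Matrix.smul_apply,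
            Matrix.one_apply_eq, smul_eq_mul, mul_one]
          push_cast
          ring
        · simp [diagonal_apply_ne _ h, Matrix.one_apply_ne h]
      rw [h2]
      abel
    rw [h1]
    refine Matrix.PosSemidef.add ?_ (smul_one_sub_inv_psd hW hcineq)
    apply Matrix.PosSemidef.diagonal
    intro i
    simp only [Pi.zero_apply]
    rw [Complex.zero_le_real]
    exact sub_nonneg.mpr (hd0 i).le
  have hRsdiag : ∀ i, (Rstar i i).re = d i - v i := by
    intro i
    rw [hRs, Matrix.sub_apply, Complex.sub_re, diagonal_apply_eq, Complex.ofReal_re]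
  have hRsmem : Rstar ∈ jointSet m PT P := by
    refine ⟨hRsPSD, ?_, ?_⟩
    · have : Rstar.trace.re = ∑ i, (d i - v i) := by
        rw [Matrix.trace, Complex.re_sum]
        exact Finset.sum_congr rfl fun i _ => hRsdiag i
      linarith [this ▸ hsumdv]
    · intro i
      rw [hRsdiag i]
      linarith [hdub i, hvpos i]
  have hRsval : mutualInfo W Rstar = Real.log W.det.re + ∑ i, Real.log (d i) := by
    rw [(hdet_split Rstar hRsPSD).1, hXRs, det_diagonal]
    congr 1
    have : (∏ i, ((d i : ℝ) : ℂ)) = ((∏ i, d i : ℝ) : ℂ) := by push_cast; rfl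
    rw [this, Complex.ofReal_re, Real.log_prod]
    intro i _
    exact (hdpos i).ne'
  -- conclude
  have hfinal : Cjoint m W PT P = Real.log W.det.re + ∑ i, Real.log (d i) := by
    rw [Cjoint]
    apply le_antisymm
    · refine csSup_le ⟨_, Set.mem_image_of_mem _ hRsmem⟩ ?_
      rintro x ⟨R, hRmem, rfl⟩
      exact hub R hRmem
    · apply le_csSup
      · refine ⟨Real.log W.det.re + ∑ i, Real.log (d i), ?_⟩
        rintro x ⟨R, hRmem, rfl⟩
        exact hub R hRmem
      · exact ⟨Rstar, hRsmem, hRsval⟩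
  rw [hfinal]
end

section
/- Let W be an m×m complex Hermitian positive definite matrix, let P > 1/λ_min(W), and let λ be a real number with 0 ≤ λ < λ_min(W). Define the Hermitian matrix R by Rᵢᵢ = min(P, 1/λ − (W⁻¹)ᵢᵢ) (interpreting 1/λ = +∞, i.e. Rᵢᵢ = P, when λ = 0) and Rᵢⱼ = −(W⁻¹)ᵢⱼ for i ≠ j. Then R is positive definite; in particular all its diagonal entries satisfy Rᵢᵢ > 0. -/
open Matrix ComplexOrder

/-- Diagonal entries of a positive definite complex matrix have positive real part. -/
lemma diag_pos_of_posDef' {m : ℕ} {M : Matrix (Fin m) (Fin m) ℂ} (hM : M.PosDef) (i : Fin m) :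
    0 < (M i i).re := by
  have h := hM.dotProduct_mulVec_pos (x := Pi.single i 1) (by
    intro h
    have := congrFun h i
    simp at this)
  have he : star (Pi.single i 1) ⬝ᵥ M *ᵥ Pi.single i 1 = M i i := by
    simp [Matrix.mulVec_single, dotProduct, Pi.single_apply, apply_ite,
      Finset.sum_ite_eq']
  rw [he] at h
  exact (Complex.lt_def.mp h).1

/-- Key positivity lemma: for `P > 1/λ_min(W)` and `0 ≤ λ < λ_min(W)`, the matrix `R`
with diagonal `min(P, 1/λ − (W⁻¹)ᵢᵢ)` and off-diagonal `−(W⁻¹)ᵢⱼ` is positive definite,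
and in particular its diagonal entries are positive. -/
theorem stmt2 (m : ℕ) (hm : 1 ≤ m) (W : Matrix (Fin m) (Fin m) ℂ) (hW : W.PosDef)
    (P : ℝ) (hPlow : 1 / lamMin hW.1 < P)
    (lam : ℝ) (hlam0 : 0 ≤ lam) (hlam1 : lam < lamMin hW.1) :
    (Rstar W P lam).PosDef ∧ ∀ i, 0 < ((Rstar W P lam) i i).re := by
  haveI : Nonempty (Fin m) := Fin.pos_iff_nonempty.mp hm
  set lm := lamMin hW.1 with hlm
  have hfin : (Set.range hW.1.eigenvalues).Finite := Set.finite_range _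
  have hne : (Set.range hW.1.eigenvalues).Nonempty := Set.range_nonempty _
  obtain ⟨i0, hi0⟩ := hne.csInf_mem hfin
  have hlmpos : 0 < lm := by
    rw [hlm, lamMin, ← hi0]; exact hW.eigenvalues_pos i0
  have hle : ∀ i, lm ≤ hW.1.eigenvalues i := fun i => csInf_le hfin.bddBelow ⟨i, rfl⟩
  have hdet : IsUnit W.det := isUnit_iff_ne_zero.mpr (ne_of_gt hW.det_pos)
  have hWiW : W⁻¹ * W = 1 := Matrix.nonsing_inv_mul W hdet
  have hWWi : W * W⁻¹ = 1 := Matrix.mul_nonsing_inv W hdet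
  have hWinv : (W⁻¹).PosDef := hW.inv
  set c : ℂ := ((lm⁻¹ : ℝ) : ℂ) with hc
  set U : Matrix (Fin m) (Fin m) ℂ := (hW.1.eigenvectorUnitary : Matrix (Fin m) (Fin m) ℂ)
    with hUdef
  have hUU : star U * U = 1 := Matrix.mem_unitaryGroup_iff'.mp hW.1.eigenvectorUnitary.2
  set Dg : Matrix (Fin m) (Fin m) ℂ := diagonal (RCLike.ofReal ∘ hW.1.eigenvalues) with hDg
  have hspec : W = U * Dg * star U := hW.1.spectral_theorem
  have hWW : W * W = U * (Dg * Dg) * star U := by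
    conv_lhs => rw [hspec]
    rw [show U * Dg * star U * (U * Dg * star U) = U * Dg * (star U * U) * Dg * star U by
      noncomm_ring, hUU]
    noncomm_ring
  have hS : (c • (W * W) - W).PosSemidef := by
    have hd : diagonal (fun i => ((lm⁻¹ * (hW.1.eigenvalues i * hW.1.eigenvalues i)
        - hW.1.eigenvalues i : ℝ) : ℂ)) = c • (Dg * Dg) - Dg := by
      ext i j
      by_cases h : i = j
      · subst h
        simp [hDg, hc]
      · simp [hDg, Matrix.diagonal_mul_diagonal, Matrix.diagonal_apply_ne _ h]
    have h1 : c • (W * W) - W =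
        U * diagonal (fun i => ((lm⁻¹ * (hW.1.eigenvalues i * hW.1.eigenvalues i)
          - hW.1.eigenvalues i : ℝ) : ℂ)) * (star U) := by
      rw [hd, hWW]
      conv_lhs => rw [hspec]
      rw [Matrix.mul_sub, Matrix.sub_mul, Matrix.mul_smul, Matrix.smul_mul]
    rw [h1]
    refine PosSemidef.mul_mul_conjTranspose_same ?_ U
    refine posSemidef_diagonal_iff.mpr fun i => ?_
    rw [Complex.zero_le_real]
    have h2 := hle i
    have h3 := hW.eigenvalues_pos i
    rw [sub_nonneg, inv_mul_eq_div, le_div_iff₀ hlmpos]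
    nlinarith
  have hN : (c • (1 : Matrix (Fin m) (Fin m) ℂ) - W⁻¹).PosSemidef := by
    have h2 : c • (1 : Matrix (Fin m) (Fin m) ℂ) - W⁻¹
        = W⁻¹ * (c • (W * W) - W) * (W⁻¹)ᴴ := by
      rw [hWinv.1.eq, Matrix.mul_sub, Matrix.sub_mul, Matrix.mul_smul, Matrix.smul_mul]
      congr 1
      · congr 1
        rw [show W⁻¹ * (W * W) * W⁻¹ = (W⁻¹ * W) * (W * W⁻¹) by noncomm_ring, hWiW, hWWi,
          one_mul]
      · rw [Matrix.mul_assoc, hWWi, Matrix.mul_one]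
    rw [h2]
    exact hS.mul_mul_conjTranspose_same _
  -- facts about diagonal entries of W⁻¹
  have ha : ∀ i, (((W⁻¹ i i).re : ℝ) : ℂ) = W⁻¹ i i := fun i => hWinv.1.coe_re_apply_self i
  have haipos : ∀ i, 0 < (W⁻¹ i i).re := fun i => diag_pos_of_posDef' hWinv i
  have hP' : lm⁻¹ < P := by rwa [one_div] at hPlow
  set Rdiag : Fin m → ℝ :=
    fun i => if lam = 0 then P else min P (1 / lam - (W⁻¹ i i).re) with hRdiag
  have hdiagpos : ∀ i, 0 < Rdiag i + (W⁻¹ i i).re - lm⁻¹ := by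
    intro i
    by_cases hl : lam = 0
    · simp only [hRdiag, hl, if_true]
      have := haipos i
      linarith
    · have hlpos : 0 < lam := lt_of_le_of_ne hlam0 (Ne.symm hl)
      have hinv : lm⁻¹ < lam⁻¹ := by
        exact inv_strictAnti₀ hlpos hlam1
      simp only [hRdiag, hl, if_false, one_div]
      rcases le_total P (lam⁻¹ - (W⁻¹ i i).re) with h | h
      · rw [min_eq_left h]
        have := haipos i
        linarith
      · rw [min_eq_right h]
        linarith
  have hsplit : Rstar W P lam =
      diagonal (fun i => ((Rdiag i + (W⁻¹ i i).re - lm⁻¹ : ℝ) : ℂ))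
        + (c • (1 : Matrix (Fin m) (Fin m) ℂ) - W⁻¹) := by
    ext i j
    by_cases h : i = j
    · subst h
      simp only [Rstar, if_pos rfl, Matrix.add_apply, Matrix.sub_apply, Matrix.smul_apply,
        Matrix.diagonal_apply_eq, Matrix.one_apply_eq, smul_eq_mul, mul_one, hc, hRdiag]
      rw [← ha i]
      simp
    · simp [Rstar, h, Matrix.diagonal_apply_ne _ h, Matrix.one_apply_ne h]
  have hPD : (Rstar W P lam).PosDef := by
    rw [hsplit]
    refine Matrix.PosDef.add_posSemidef ?_ hN
    refine (Matrix.posDef_diagonal_iff).mpr fun i => ?_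
    exact Complex.zero_lt_real.mpr (hdiagpos i)
  exact ⟨hPD, fun i => diag_pos_of_posDef' hPD i⟩
end

section
/- Let W be an m×m complex Hermitian positive definite matrix and let P, P_T > 0 with P_T < m·P. Then the function f(λ) = Σᵢ min(P, 1/λ − (W⁻¹)ᵢᵢ), defined for λ > 0, is continuous and non-increasing, and the equation f(λ) = P_T has a unique solution λ > 0. Moreover, if in addition P_T > m/λ_min(W) − tr(W⁻¹), then this solution satisfies λ < λ_min(W). -/
open Matrix ComplexOrder

lemma diag_re_pos_s3 {m : ℕ} {W : Matrix (Fin m) (Fin m) ℂ} (hW : W.PosDef) (i : Fin m) :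
    0 < (W i i).re := by
  have := hW.re_dotProduct_pos (x := Pi.single i 1)
    (by simp [Pi.single_eq_same, funext_iff]; exact ⟨i, by simp⟩)
  simpa [dotProduct, mulVec, Pi.single_apply, Finset.sum_ite_eq] using this

/-- The function `f(λ) = Σᵢ min(P, 1/λ − (W⁻¹)ᵢᵢ)` is continuous and non-increasing
on `(0, ∞)`, the equation `f(λ) = P_T` has a unique solution `λ > 0` whenever
`0 < P_T < m·P`, and this solution is below `λ_min(W)` when
`P_T > m/λ_min(W) − tr(W⁻¹)`. -/
theorem stmt3 (m : ℕ) (hm : 1 ≤ m) (W : Matrix (Fin m) (Fin m) ℂ) (hW : W.PosDef)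
    (P PT : ℝ) (hP : 0 < P) (hPT : 0 < PT) (hPTm : PT < m * P) :
    ContinuousOn (fun lam : ℝ => ∑ i, min P (1 / lam - (W⁻¹ i i).re)) (Set.Ioi 0) ∧
    AntitoneOn (fun lam : ℝ => ∑ i, min P (1 / lam - (W⁻¹ i i).re)) (Set.Ioi 0) ∧
    (∃! lam : ℝ, 0 < lam ∧ ∑ i, min P (1 / lam - (W⁻¹ i i).re) = PT) ∧
    (m / lamMin hW.1 - (W⁻¹).trace.re < PT →
      ∀ lam : ℝ, 0 < lam → ∑ i, min P (1 / lam - (W⁻¹ i i).re) = PT →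
        lam < lamMin hW.1) := by
  have hWinv : (W⁻¹).PosDef := hW.inv
  set c : Fin m → ℝ := fun i => (W⁻¹ i i).re with hcdef
  have hcpos : ∀ i, 0 < c i := fun i => diag_re_pos_s3 hWinv i
  set f : ℝ → ℝ := fun lam => ∑ i, min P (1 / lam - c i) with hfdef
  -- trace
  have htr : (W⁻¹).trace.re = ∑ i, c i := by
    simp [Matrix.trace, Matrix.diag, Complex.re_sum, hcdef]
  have hT : (0:ℝ) < ∑ i, c i := Finset.sum_pos (fun i _ => hcpos i)
    (Finset.univ_nonempty_iff.mpr ⟨⟨0, hm⟩⟩)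
  -- continuity
  have hcont : ContinuousOn f (Set.Ioi 0) := by
    apply continuousOn_finset_sum
    intro i _
    exact ContinuousOn.inf continuousOn_const
      (((continuousOn_const.div continuousOn_id fun x hx => ne_of_gt hx)).sub continuousOn_const)
  -- antitone
  have hanti : AntitoneOn f (Set.Ioi 0) := by
    intro a ha b hb hab
    apply Finset.sum_le_sum
    intro i _
    exact min_le_min le_rfl (sub_le_sub_right
      (one_div_le_one_div_of_le (Set.mem_Ioi.mp ha) hab) _)
  -- key upper bound: f lam ≤ m / lam - ∑ c
  have hub : ∀ lam : ℝ, f lam ≤ (m : ℝ) / lam - ∑ i, c i := by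
    intro lam
    have : f lam ≤ ∑ i : Fin m, (1 / lam - c i) :=
      Finset.sum_le_sum fun i _ => min_le_right _ _
    simpa [Finset.sum_sub_distrib, div_eq_mul_inv, mul_comm] using this
  -- existence
  set a : ℝ := 1 / (P + ∑ i, |c i| + 1) with hadef
  have hden : 0 < P + ∑ i, |c i| + 1 := by positivity
  have ha : 0 < a := by positivity
  have hfa : f a = m * P := by
    have : ∀ i : Fin m, min P (1 / a - c i) = P := by
      intro i
      have h1 : 1 / a = P + ∑ j, |c j| + 1 := by rw [hadef, one_div_one_div]
      have h2 : c i ≤ ∑ j, |c j| :=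
        le_trans (le_abs_self _) (Finset.single_le_sum (f := fun j => |c j|)
          (fun j _ => abs_nonneg _) (Finset.mem_univ i))
      have : P ≤ 1 / a - c i := by rw [h1]; linarith
      exact min_eq_left this
    rw [hfdef]
    beta_reduce
    rw [Finset.sum_congr rfl (fun i _ => this i)]
    simp [Finset.card_univ, mul_comm]
  set b : ℝ := max a ((m : ℝ) / (PT + ∑ i, c i)) + 1 with hbdef
  have hb : 0 < b := by positivity
  have hab : a ≤ b := by
    rw [hbdef]
    have := le_max_left a ((m : ℝ) / (PT + ∑ i, c i))
    linarith
  have hfb : f b < PT := by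
    have hmb : (m : ℝ) / b < PT + ∑ i, c i := by
      rw [div_lt_iff₀ hb]
      have h1 : (m : ℝ) / (PT + ∑ i, c i) < b := by
        rw [hbdef]; have := le_max_right a ((m : ℝ) / (PT + ∑ i, c i)); linarith
      have h2 : (0:ℝ) < PT + ∑ i, c i := by linarith
      calc (m : ℝ) = ((m : ℝ) / (PT + ∑ i, c i)) * (PT + ∑ i, c i) := by
            field_simp
        _ < (PT + ∑ i, c i) * b := by
            rw [mul_comm]; exact mul_lt_mul_of_pos_left h1 h2
    have := hub b
    linarith
  have hIcc : Set.Icc a b ⊆ Set.Ioi 0 := fun x hx => lt_of_lt_of_le ha hx.1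
  have hexists : ∃ lam : ℝ, 0 < lam ∧ f lam = PT := by
    have hmem : PT ∈ Set.Icc (f b) (f a) := ⟨le_of_lt hfb, by rw [hfa]; linarith⟩
    have := intermediate_value_Icc' hab (hcont.mono hIcc) hmem
    obtain ⟨lam, hlam, hflam⟩ := this
    exact ⟨lam, lt_of_lt_of_le ha hlam.1, hflam⟩
  -- uniqueness
  have huniq : ∀ x y : ℝ, 0 < x → f x = PT → 0 < y → f y = PT → x = y := by
    have key : ∀ x y : ℝ, 0 < x → f x = PT → 0 < y → f y = PT → x < y → False := by
      intro x y hx hfx hy hfy hxy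
      -- some term at x is below P
      have hex : ∃ i : Fin m, 1 / x - c i < P := by
        by_contra h
        push_neg at h
        have : f x = m * P := by
          have h2 : ∀ i : Fin m, min P (1 / x - c i) = P := fun i => min_eq_left (h i)
          rw [hfdef]
          beta_reduce
          rw [Finset.sum_congr rfl (fun i _ => h2 i)]
          simp [Finset.card_univ, mul_comm]
        rw [hfx] at this; linarith
      obtain ⟨i, hi⟩ := hex
      have hlt : f y < f x := by
        apply Finset.sum_lt_sum
        · intro j _
          exact min_le_min le_rfl (sub_le_sub_right (one_div_le_one_div_of_le hx hxy.le) _)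
        · refine ⟨i, Finset.mem_univ i, ?_⟩
          have h1 : 1 / y < 1 / x := one_div_lt_one_div_of_lt hx hxy
          have h2 : min P (1 / y - c i) ≤ 1 / y - c i := min_le_right _ _
          have h3 : min P (1 / x - c i) = 1 / x - c i := min_eq_right hi.le
          rw [h3]; linarith
      rw [hfx, hfy] at hlt; linarith
    intro x y hx hfx hy hfy
    rcases lt_trichotomy x y with h | h | h
    · exact absurd (key x y hx hfx hy hfy h) (fun h => h)
    · exact h
    · exact absurd (key y x hy hfy hx hfx h) (fun h => h)
  refine ⟨hcont, hanti, ?_, ?_⟩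
  · obtain ⟨lam, hlam, hflam⟩ := hexists
    exact ⟨lam, ⟨hlam, hflam⟩, fun y hy => huniq y lam hy.1 hy.2 hlam hflam⟩
  · intro hgap lam hlam hflam
    -- lamMin > 0
    have hne : (Set.range hW.1.eigenvalues).Nonempty := ⟨_, ⟨⟨0, hm⟩, rfl⟩⟩
    have hfin : (Set.range hW.1.eigenvalues).Finite := Set.finite_range _
    have hmem := hne.csInf_mem hfin
    obtain ⟨j, hj⟩ := hmem
    have hlmin : 0 < lamMin hW.1 := by
      rw [lamMin, ← hj]; exact hW.eigenvalues_pos j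
    have h1 : PT ≤ (m : ℝ) / lam - (W⁻¹).trace.re := by
      rw [htr]; rw [← hflam]; exact hub lam
    have h2 : (m : ℝ) / lamMin hW.1 < (m : ℝ) / lam := by linarith
    have hm' : (0:ℝ) < m := by exact_mod_cast hm
    rw [div_lt_div_iff₀ hlmin hlam] at h2
    exact lt_of_mul_lt_mul_left (by linarith) hm'.le
end

section
/- Let W be an m×m complex Hermitian positive definite matrix and let P, P_T > 0 satisfy P > 1/λ_min(W) and P_T > m/λ_min(W) − tr(W⁻¹). Set 1/λ = (P_T + tr(W⁻¹))/m and suppose P ≥ 1/λ − (W⁻¹)ᵢᵢ for every i (all per-antenna constraints inactive). Then the water-filling matrix R* = (1/λ)·I − W⁻¹ is positive definite, lies in the joint constraint set S(P_T, P), and maximizes log det(I + W·R) over R ∈ S(P_T, P). -/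
open Matrix ComplexOrder

theorem WF.trace_eq_sum_eig {n : Type*} [Fintype n] [DecidableEq n] {A : Matrix n n ℂ}
    (hA : A.IsHermitian) : A.trace = ((∑ i, hA.eigenvalues i : ℝ) : ℂ) := by
  conv_lhs => rw [hA.spectral_theorem]
  rw [Unitary.conjStarAlgAut_apply, Matrix.trace_mul_cycle, Unitary.coe_star_mul_self, Matrix.one_mul, Matrix.trace_diagonal]
  push_cast
  rfl

theorem WF.amgm {n : Type*} [Fintype n] [Nonempty n] (ν : n → ℝ) (hν : ∀ i, 0 ≤ ν i) :
    ∏ i, ν i ≤ ((∑ i, ν i) / Fintype.card n) ^ (Fintype.card n) := by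
  have hcard : (0:ℝ) < Fintype.card n := by positivity
  have h := Real.geom_mean_le_arith_mean (Finset.univ (α := n)) (fun _ => 1) ν
    (fun _ _ => zero_le_one) (by simpa using hcard) (fun i _ => hν i)
  simp only [Real.rpow_one, one_mul, Finset.sum_const, Finset.card_univ, nsmul_eq_mul,
    mul_one] at h
  have h2 : ((∏ i, ν i) ^ ((Fintype.card n : ℝ))⁻¹) ^ (Fintype.card n) ≤
      ((∑ i, ν i) / Fintype.card n) ^ (Fintype.card n) :=
    pow_le_pow_left₀ (Real.rpow_nonneg (Finset.prod_nonneg fun i _ => hν i) _) h _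
  rwa [← Real.rpow_natCast ((∏ i, ν i) ^ ((Fintype.card n : ℝ))⁻¹), ← Real.rpow_mul
    (Finset.prod_nonneg fun i _ => hν i), inv_mul_cancel₀ hcard.ne', Real.rpow_one] at h2

theorem WF.spec_inv_bound {n : Type*} [Fintype n] [DecidableEq n] {W : Matrix n n ℂ}
    (hW : W.PosDef) {c : ℝ} (hc : 0 < c) (hle : ∀ i, c ≤ hW.1.eigenvalues i) :
    ∀ μ ∈ spectrum ℝ W⁻¹, μ ≤ 1 / c := by
  intro μ hμ
  have hWinv : (W⁻¹).PosDef := hW.inv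
  have hμpos : 0 < μ := by
    rw [Matrix.IsHermitian.spectrum_real_eq_range_eigenvalues hWinv.1] at hμ
    obtain ⟨i, hi⟩ := hμ
    exact hi ▸ hWinv.eigenvalues_pos i
  have hu := hW.isUnit
  have hinv : μ⁻¹ ∈ spectrum ℝ W := by
    have h := spectrum.inv_mem_iff (r := (Units.mk0 μ hμpos.ne')⁻¹) (a := hu.unit)
    rw [IsUnit.unit_spec] at h
    apply h.mpr
    rw [inv_inv, Matrix.coe_units_inv, IsUnit.unit_spec]
    exact hμ
  rw [Matrix.IsHermitian.spectrum_real_eq_range_eigenvalues hW.1] at hinv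
  obtain ⟨j, hj⟩ := hinv
  have hcj : c ≤ μ⁻¹ := hj ▸ hle j
  rw [one_div]
  calc μ = (μ⁻¹)⁻¹ := (inv_inv μ).symm
  _ ≤ c⁻¹ := inv_anti₀ hc hcj

theorem WF.psd_piece {n : Type*} [Fintype n] [DecidableEq n] {M : Matrix n n ℂ}
    (hM : M.IsHermitian) {c : ℝ} (hspec : ∀ μ ∈ spectrum ℝ M, μ ≤ c) :
    (((c : ℂ)) • (1 : Matrix n n ℂ) - M).PosSemidef := by
  have hsm : ((c : ℂ)) • (1 : Matrix n n ℂ) = algebraMap ℝ (Matrix n n ℂ) c := by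
    rw [Algebra.algebraMap_eq_smul_one]
    ext i j
    simp [Matrix.smul_apply, Complex.real_smul]
  have hB : (((c : ℂ)) • (1 : Matrix n n ℂ) - M).IsHermitian := by
    simp [Matrix.IsHermitian, Matrix.conjTranspose_smul, hM.eq]
  apply hB.posSemidef_iff_eigenvalues_nonneg.mpr
  intro i
  have hmem : hB.eigenvalues i ∈ spectrum ℝ (algebraMap ℝ (Matrix n n ℂ) c - M) := by
    rw [← hsm]; exact hB.eigenvalues_mem_spectrum_real i
  rw [← spectrum.singleton_sub_eq] at hmem
  obtain ⟨a, ha, b, hb, hab⟩ := Set.mem_sub.mp hmem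
  rw [Set.mem_singleton_iff] at ha
  subst ha
  have h2 := hspec b hb
  show (0:ℝ) ≤ _
  linarith [hab]

theorem WF.scalar_posdef {n : Type*} [Fintype n] [DecidableEq n] {r : ℝ} (hr : 0 < r) :
    (((r : ℂ)) • (1 : Matrix n n ℂ)).PosDef := by
  rw [Matrix.smul_one_eq_diagonal]
  exact Matrix.posDef_diagonal_iff.mpr fun i => by positivity

/-- When all per-antenna constraints are inactive, the standard water-filling matrix
`R* = (1/λ)·I − W⁻¹` with `1/λ = (P_T + tr W⁻¹)/m` is the full-rank optimum under the
joint constraints. -/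
theorem stmt5 (m : ℕ) (hm : 1 ≤ m) (W : Matrix (Fin m) (Fin m) ℂ) (hW : W.PosDef)
    (P PT : ℝ) (hP : 0 < P) (hPT : 0 < PT)
    (hPlow : 1 / lamMin hW.1 < P)
    (hPTlow : m / lamMin hW.1 - (W⁻¹).trace.re < PT)
    (invlam : ℝ) (hinvlam : invlam = (PT + (W⁻¹).trace.re) / m)
    (hPAinactive : ∀ i, invlam - (W⁻¹ i i).re ≤ P) :
    ((invlam : ℂ) • (1 : Matrix (Fin m) (Fin m) ℂ) - W⁻¹).PosDef ∧
    (invlam : ℂ) • (1 : Matrix (Fin m) (Fin m) ℂ) - W⁻¹ ∈ jointSet m PT P ∧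
    ∀ R ∈ jointSet m PT P,
      mutualInfo W R ≤ mutualInfo W ((invlam : ℂ) • (1 : Matrix (Fin m) (Fin m) ℂ) - W⁻¹) := by
  classical
  have hm0 : (0:ℝ) < m := by exact_mod_cast hm
  haveI : Nonempty (Fin m) := ⟨⟨0, hm⟩⟩
  set c : ℝ := lamMin hW.1 with hc
  have hcmem : c ∈ Set.range hW.1.eigenvalues := by
    rw [hc, lamMin]
    exact (Set.range_nonempty _).csInf_mem (Set.finite_range _)
  have hcpos : 0 < c := by
    obtain ⟨j, hj⟩ := hcmem
    exact hj ▸ hW.eigenvalues_pos j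
  have hcle : ∀ i, c ≤ hW.1.eigenvalues i := fun i =>
    csInf_le (Set.finite_range _).bddBelow ⟨i, rfl⟩
  have hWinv : (W⁻¹).PosDef := hW.inv
  have hspec : ∀ μ ∈ spectrum ℝ W⁻¹, μ ≤ 1 / c := WF.spec_inv_bound hW hcpos hcle
  have hB : (((1/c : ℝ) : ℂ) • (1 : Matrix (Fin m) (Fin m) ℂ) - W⁻¹).PosSemidef :=
    WF.psd_piece hWinv.1 hspec
  -- invlam > 1/c
  have hgt : 1 / c < invlam := by
    have h1 : (1/c) * m = (m:ℝ)/c := by ring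
    rw [hinvlam, lt_div_iff₀ hm0, h1]
    linarith
  have hsplit : (invlam : ℂ) • (1 : Matrix (Fin m) (Fin m) ℂ) - W⁻¹ =
      ((invlam - 1/c : ℝ) : ℂ) • (1 : Matrix (Fin m) (Fin m) ℂ) +
        (((1/c : ℝ) : ℂ) • (1 : Matrix (Fin m) (Fin m) ℂ) - W⁻¹) := by
    push_cast
    module
  have hRstarPD : ((invlam : ℂ) • (1 : Matrix (Fin m) (Fin m) ℂ) - W⁻¹).PosDef := by
    rw [hsplit]
    exact (WF.scalar_posdef (by linarith)).add_posSemidef hB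
  -- trace computations
  have hIm : invlam * m = PT + (W⁻¹).trace.re := by
    rw [hinvlam]; field_simp
  have htrre : ((invlam : ℂ) • (1 : Matrix (Fin m) (Fin m) ℂ) - W⁻¹).trace.re
      = invlam * m - (W⁻¹).trace.re := by
    have h1 : ((invlam : ℂ) • (1 : Matrix (Fin m) (Fin m) ℂ) - W⁻¹).trace
        = ((invlam * m : ℝ) : ℂ) - (W⁻¹).trace := by
      rw [Matrix.trace_sub, Matrix.trace_smul, Matrix.trace_one]
      push_cast
      simp [smul_eq_mul, Fintype.card_fin]
    rw [h1, Complex.sub_re, Complex.ofReal_re]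
  have hmem : (invlam : ℂ) • (1 : Matrix (Fin m) (Fin m) ℂ) - W⁻¹ ∈ jointSet m PT P := by
    refine ⟨hRstarPD.posSemidef, ?_, ?_⟩
    · rw [htrre]; linarith
    · intro i
      have : (((invlam : ℂ) • (1 : Matrix (Fin m) (Fin m) ℂ) - W⁻¹) i i).re
          = invlam - (W⁻¹ i i).re := by
        simp [Matrix.sub_apply, Matrix.smul_apply, Matrix.one_apply_eq, Complex.sub_re]
      rw [this]
      exact hPAinactive i
  refine ⟨hRstarPD, hmem, ?_⟩
  -- optimality
  intro R hR
  obtain ⟨hRpsd, hRtr, _⟩ := hR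
  have hApd : (W⁻¹ + R).PosDef := hWinv.add_posSemidef hRpsd
  have hdetW : IsUnit W.det := (Matrix.isUnit_iff_isUnit_det W).mp hW.isUnit
  have hfact : 1 + W * R = W * (W⁻¹ + R) := by
    rw [mul_add, Matrix.mul_nonsing_inv W hdetW]
  set ν := hApd.1.eigenvalues with hν
  have hνpos : ∀ i, 0 < ν i := hApd.eigenvalues_pos
  set dW := ∏ i, hW.1.eigenvalues i with hdW
  have hdWpos : 0 < dW := Finset.prod_pos fun i _ => hW.eigenvalues_pos i
  have hdetWeq : W.det = ((dW : ℝ) : ℂ) := by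
    rw [hW.1.det_eq_prod_eigenvalues, hdW]; norm_cast
  have hdetAeq : (W⁻¹ + R).det = ((∏ i, ν i : ℝ) : ℂ) := by
    rw [hApd.1.det_eq_prod_eigenvalues]; norm_cast
  have hprodpos : 0 < ∏ i, ν i := Finset.prod_pos fun i _ => hνpos i
  -- sum of eigenvalues bound
  have hsum : ∑ i, ν i ≤ m * invlam := by
    have h1 : (W⁻¹ + R).trace = ((∑ i, ν i : ℝ) : ℂ) := WF.trace_eq_sum_eig hApd.1
    have h2 : (W⁻¹ + R).trace = (W⁻¹).trace + R.trace := Matrix.trace_add _ _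
    have h3 : (∑ i, ν i) = (W⁻¹).trace.re + R.trace.re := by
      have := congrArg Complex.re (h1.symm.trans h2)
      simpa [Complex.add_re] using this
    rw [h3]
    linarith [hIm]
  have hsumnn : 0 ≤ ∑ i, ν i := Finset.sum_nonneg fun i _ => (hνpos i).le
  have hinvlampos : 0 < invlam := lt_trans (by positivity) hgt
  have hbound : ∏ i, ν i ≤ invlam ^ m := by
    have h1 := WF.amgm ν fun i => (hνpos i).le
    rw [Fintype.card_fin] at h1
    refine h1.trans ?_
    have h2 : (∑ i, ν i) / m ≤ invlam := by
      rw [div_le_iff₀ hm0]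
      linarith [hsum]
    exact pow_le_pow_left₀ (by positivity) h2 m
  -- compute both mutual informations
  have hmiR : mutualInfo W R = Real.log (dW * ∏ i, ν i) := by
    rw [mutualInfo, hfact, Matrix.det_mul, hdetWeq, hdetAeq, ← Complex.ofReal_mul,
      Complex.ofReal_re]
  have hfact2 : 1 + W * ((invlam : ℂ) • (1 : Matrix (Fin m) (Fin m) ℂ) - W⁻¹)
      = W * ((invlam : ℂ) • (1 : Matrix (Fin m) (Fin m) ℂ)) := by
    rw [mul_sub, Matrix.mul_nonsing_inv W hdetW]
    abel
  have hmiRs : mutualInfo W ((invlam : ℂ) • (1 : Matrix (Fin m) (Fin m) ℂ) - W⁻¹)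
      = Real.log (dW * invlam ^ m) := by
    rw [mutualInfo, hfact2, Matrix.det_mul, hdetWeq, Matrix.det_smul, Matrix.det_one,
      Fintype.card_fin, mul_one]
    rw [show ((invlam : ℂ)) ^ m = ((invlam ^ m : ℝ) : ℂ) by norm_cast]
    rw [← Complex.ofReal_mul, Complex.ofReal_re]
  rw [hmiR, hmiRs]
  apply Real.log_le_log (by positivity)
  exact mul_le_mul_of_nonneg_left hbound hdWpos.le
end

section
/- Let W be an m×m complex Hermitian positive definite matrix and let P, P_T > 0 satisfy P > 1/λ_min(W) and P_T ≥ m·P. Then the matrix R* = P·I − D̄(W⁻¹), where D̄(W⁻¹) is the off-diagonal part of W⁻¹, is positive definite, lies in the joint constraint set S(P_T, P), and maximizes log det(I + W·R) over R ∈ S(P_T, P); moreover in this case the capacity under the joint constraints equals the capacity under the per-antenna constraints alone. -/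
open Matrix ComplexOrder

/-- The off-diagonal part `D̄(A) = A − D(A)` of a matrix. -/
def offDiag {m : ℕ} (A : Matrix (Fin m) (Fin m) ℂ) : Matrix (Fin m) (Fin m) ℂ :=
  fun i j => if i = j then 0 else A i j

/-- The per-antenna-only constraint set. -/
def pacSet (m : ℕ) (P : ℝ) : Set (Matrix (Fin m) (Fin m) ℂ) :=
  {R | R.PosSemidef ∧ ∀ i, (R i i).re ≤ P}

/- ---------- auxiliary lemmas ---------- -/

theorem myPosDefConj {n : Type*} [Fintype n] [DecidableEq n] {A B : Matrix n n ℂ} (hA : A.PosDef)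
    (hB : IsUnit B) : (B * A * Bᴴ).PosDef := by
  refine Matrix.PosDef.of_dotProduct_mulVec_pos ?_ ?_
  · exact Matrix.isHermitian_mul_mul_conjTranspose _ hA.1
  · intro x hx
    have hx' : Bᴴ *ᵥ x ≠ 0 := by
      have hinj : Function.Injective (Bᴴ *ᵥ ·) :=
        Matrix.mulVec_injective_iff_isUnit.mpr ((Matrix.isUnit_conjTranspose _).mpr hB)
      intro h0
      exact hx (hinj (by simpa using h0))
    simpa only [star_mulVec, dotProduct_mulVec, vecMul_vecMul, conjTranspose_conjTranspose]
      using hA.dotProduct_mulVec_pos hx'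

theorem myDiagPos {n : Type*} [Fintype n] [DecidableEq n] {M : Matrix n n ℂ} (hM : M.PosDef)
    (i : n) : 0 < M i i := by
  have h := hM.dotProduct_mulVec_pos (x := Pi.single i 1) (by simp [Function.ne_iff])
  simpa [dotProduct, Pi.single_apply, apply_ite] using h

theorem myDiagRePos {n : Type*} [Fintype n] [DecidableEq n] {M : Matrix n n ℂ} (hM : M.PosDef)
    (i : n) : 0 < (M i i).re ∧ (M i i).im = 0 := by
  have h := myDiagPos hM i
  rw [Complex.lt_def] at h
  simpa using ⟨h.1, h.2.symm⟩

theorem myTraceEqSumEig {n : Type*} [Fintype n] [DecidableEq n] {N : Matrix n n ℂ}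
    (hN : N.IsHermitian) : N.trace = ∑ i, (hN.eigenvalues i : ℂ) := by
  have hUU' : star (hN.eigenvectorUnitary : Matrix n n ℂ) * (hN.eigenvectorUnitary : Matrix n n ℂ)
      = 1 := mem_unitaryGroup_iff'.mp hN.eigenvectorUnitary.2
  conv_lhs => rw [hN.spectral_theorem, Unitary.conjStarAlgAut_apply]
  rw [Matrix.trace_mul_cycle, hUU', one_mul, trace_diagonal]
  rfl

theorem smulOneSubInvPosDef {n : Type*} [Fintype n] [DecidableEq n] {W : Matrix n n ℂ}
    (hW : W.PosDef) {c : ℝ} (hc : ∀ i, (hW.1.eigenvalues i)⁻¹ < c) :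
    ((c:ℂ) • (1 : Matrix n n ℂ) - W⁻¹).PosDef := by
  set U : Matrix n n ℂ := (hW.1.eigenvectorUnitary : Matrix n n ℂ) with hU
  have hUU : U * star U = 1 := mem_unitaryGroup_iff.mp hW.1.eigenvectorUnitary.2
  have hUU' : star U * U = 1 := mem_unitaryGroup_iff'.mp hW.1.eigenvectorUnitary.2
  have hunit : IsUnit U := Matrix.isUnit_iff_isUnit_det U |>.mpr
    (IsUnit.of_mul_eq_one (star U).det (by rw [← det_mul, hUU, det_one]))
  have hED : diagonal (fun i => ((hW.1.eigenvalues i)⁻¹ : ℂ)) *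
      diagonal (RCLike.ofReal ∘ hW.1.eigenvalues) = 1 := by
    rw [diagonal_mul_diagonal]
    have : (fun i => ((hW.1.eigenvalues i : ℂ))⁻¹ * (RCLike.ofReal ∘ hW.1.eigenvalues) i)
        = fun _ => (1:ℂ) := by
      funext i
      have h0 : (hW.1.eigenvalues i : ℂ) ≠ 0 := by
        exact_mod_cast (hW.eigenvalues_pos i).ne'
      simp only [Function.comp_apply]
      exact inv_mul_cancel₀ h0
    rw [this, diagonal_one]
  have hinv : W⁻¹ = U * diagonal (fun i => ((hW.1.eigenvalues i)⁻¹ : ℂ)) * star U := by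
    apply inv_eq_left_inv
    calc (U * diagonal (fun i => ((hW.1.eigenvalues i)⁻¹ : ℂ)) * star U) * W
        = (U * diagonal (fun i => ((hW.1.eigenvalues i)⁻¹ : ℂ)) * star U) *
          (U * diagonal (RCLike.ofReal ∘ hW.1.eigenvalues) * star U) := by
          congr 1; exact hW.1.spectral_theorem
      _ = U * (diagonal (fun i => ((hW.1.eigenvalues i)⁻¹ : ℂ)) * (star U * U) *
            diagonal (RCLike.ofReal ∘ hW.1.eigenvalues)) * star U := by noncomm_ring
      _ = 1 := by rw [hUU', mul_one, hED, mul_one, hUU]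
  have key : (c:ℂ) • (1 : Matrix n n ℂ) - W⁻¹ =
      U * diagonal (fun i => ((c - (hW.1.eigenvalues i)⁻¹ : ℝ) : ℂ)) * star U := by
    have h1 : ((c:ℂ) • (1 : Matrix n n ℂ)) = U * ((c:ℂ) • 1) * star U := by
      rw [mul_smul_comm, smul_mul_assoc, mul_one, hUU]
    rw [hinv, h1, ← Matrix.sub_mul, ← Matrix.mul_sub]
    congr 2
    rw [smul_one_eq_diagonal, diagonal_sub]
    funext i
    push_cast
    ring
  rw [key]
  exact myPosDefConj (posDef_diagonal_iff.mpr fun i => by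
    rw [Complex.zero_lt_real]; linarith [hc i]) hunit

/-- **Hadamard's determinant inequality** for positive definite complex matrices. -/
theorem myHadamard {n : Type*} [Fintype n] [DecidableEq n] {M : Matrix n n ℂ} (hM : M.PosDef) :
    M.det.re ≤ ∏ i, (M i i).re := by
  have hdpos : ∀ i, 0 < (M i i).re := fun i => (myDiagRePos hM i).1
  set d : n → ℝ := fun i => Real.sqrt ((M i i).re) with hd_def
  have hd : ∀ i, 0 < d i := fun i => Real.sqrt_pos.mpr (hdpos i)
  have hdsq : ∀ i, d i ^ 2 = (M i i).re := fun i => Real.sq_sqrt (hdpos i).le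
  have hMdiag : ∀ i, M i i = ((d i ^ 2 : ℝ) : ℂ) := by
    intro i
    rw [hdsq]
    exact Complex.ext rfl (by simpa using (myDiagRePos hM i).2)
  set B : Matrix n n ℂ := diagonal (fun i => ((d i : ℂ))⁻¹) with hB_def
  have hBdet : B.det = (∏ i, ((d i : ℂ))⁻¹) := by rw [hB_def, det_diagonal]
  have hBunit : IsUnit B := by
    rw [Matrix.isUnit_iff_isUnit_det, hBdet, isUnit_iff_ne_zero]
    exact Finset.prod_ne_zero_iff.mpr fun i _ => by
      exact inv_ne_zero (by exact_mod_cast (hd i).ne')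
  have hBH : Bᴴ = B := by
    rw [hB_def, diagonal_conjTranspose]
    have : (star fun i => ((d i : ℂ))⁻¹) = fun i => ((d i : ℂ))⁻¹ := by
      funext i
      simp [Complex.star_def, map_inv₀, Complex.conj_ofReal]
    rw [this]
  set N : Matrix n n ℂ := B * M * B with hN_def
  have hN : N.PosDef := by
    have := myPosDefConj hM hBunit
    rwa [hBH] at this
  have hNdiag : ∀ i, N i i = 1 := by
    intro i
    have hdne : (d i : ℂ) ≠ 0 := by exact_mod_cast (hd i).ne'
    rw [hN_def, hB_def, Matrix.mul_diagonal, Matrix.diagonal_mul, hMdiag i]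
    push_cast
    field_simp
  have hcard : N.trace = (Fintype.card n : ℂ) := by
    rw [Matrix.trace]
    simp [Matrix.diag, hNdiag]
  set μ : n → ℝ := hN.1.eigenvalues with hmu
  have hsum : ∑ i, μ i = (Fintype.card n : ℝ) := by
    have h1 : N.trace = ∑ i, (μ i : ℂ) := myTraceEqSumEig hN.1
    rw [hcard] at h1
    exact_mod_cast h1.symm
  have hdetN : N.det = ((∏ i, μ i : ℝ) : ℂ) := by
    rw [hN.1.det_eq_prod_eigenvalues]; push_cast; rfl
  have hprodle : ∏ i, μ i ≤ 1 := by
    rcases isEmpty_or_nonempty n with h | h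
    · simp
    · have hcardpos : (0:ℝ) < (Fintype.card n : ℝ) := by
        exact_mod_cast Fintype.card_pos
      have hgm := Real.geom_mean_le_arith_mean Finset.univ (fun _ => (1:ℝ)) μ
        (fun _ _ => zero_le_one) (by simpa using hcardpos)
        (fun i _ => (hN.eigenvalues_pos i).le)
      simp only [Real.rpow_one, one_mul, Finset.sum_const, Finset.card_univ, nsmul_eq_mul,
        mul_one] at hgm
      rw [hsum] at hgm
      have hrhs : (Fintype.card n : ℝ) / (Fintype.card n : ℝ) = 1 := div_self hcardpos.ne'
      rw [hrhs] at hgm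
      have hpn : (0:ℝ) ≤ ∏ i, μ i := Finset.prod_nonneg fun i _ => (hN.eigenvalues_pos i).le
      have h2 : ((∏ i, μ i) ^ ((Fintype.card n : ℝ))⁻¹) ^ (Fintype.card n : ℝ) ≤ 1 :=
        Real.rpow_le_one (Real.rpow_nonneg hpn _) hgm (le_of_lt hcardpos)
      rwa [← Real.rpow_mul hpn, inv_mul_cancel₀ hcardpos.ne', Real.rpow_one] at h2
  set c : ℝ := ∏ i, d i with hc
  have hcpos : 0 < c := Finset.prod_pos fun i _ => hd i
  have hcast : ((c : ℝ) : ℂ) = ∏ i, ((d i) : ℂ) := by rw [hc]; push_cast; rfl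
  have hdetN2 : N.det = ((c : ℂ))⁻¹ * M.det * ((c : ℂ))⁻¹ := by
    rw [hN_def, det_mul, det_mul, hBdet, Finset.prod_inv_distrib, ← hcast]
  have hcne : (c:ℂ) ≠ 0 := by exact_mod_cast hcpos.ne'
  have hdetM : M.det = ((c^2 : ℝ) : ℂ) * N.det := by
    rw [hdetN2]
    push_cast
    field_simp
  have : M.det.re = c^2 * N.det.re := by
    rw [hdetM, Complex.re_ofReal_mul]
  rw [this, hdetN, Complex.ofReal_re]
  calc c^2 * (∏ i, μ i) ≤ c^2 * 1 := by
        exact mul_le_mul_of_nonneg_left hprodle (sq_nonneg c)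
    _ = ∏ i, (M i i).re := by
        rw [mul_one, hc, ← Finset.prod_pow]
        exact Finset.prod_congr rfl fun i _ => hdsq i

theorem myDetReal {n : Type*} [Fintype n] [DecidableEq n] {M : Matrix n n ℂ} (hM : M.PosDef) :
    M.det = ((M.det.re : ℝ) : ℂ) ∧ 0 < M.det.re := by
  have h := hM.det_pos
  rw [Complex.lt_def] at h
  refine ⟨Complex.ext rfl (by simpa using h.2.symm), by simpa using h.1⟩

theorem keyBound {m : ℕ} {W : Matrix (Fin m) (Fin m) ℂ} (hW : W.PosDef) {P : ℝ}
    (R : Matrix (Fin m) (Fin m) ℂ) (hR : R.PosSemidef) (hRd : ∀ i, (R i i).re ≤ P) :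
    0 < (1 + W * R).det.re ∧
    (1 + W * R).det.re ≤ W.det.re * ∏ i, (P + (W⁻¹ i i).re) := by
  have hWdet : W.det ≠ 0 := hW.det_pos.ne'
  have hM : (W⁻¹ + R).PosDef := hW.inv.add_posSemidef hR
  have hid : (1 : Matrix (Fin m) (Fin m) ℂ) + W * R = W * (W⁻¹ + R) := by
    rw [mul_add, Matrix.mul_nonsing_inv _ (isUnit_iff_ne_zero.mpr hWdet)]
  have hdet : (1 + W * R).det = W.det * (W⁻¹ + R).det := by rw [hid, det_mul]
  have hWre := myDetReal hW
  have hMre := myDetReal hM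
  have hre : (1 + W * R).det.re = W.det.re * (W⁻¹ + R).det.re := by
    rw [hdet]; conv_lhs => rw [hWre.1]
    rw [Complex.re_ofReal_mul]
  constructor
  · rw [hre]; exact mul_pos hWre.2 hMre.2
  · rw [hre]
    refine mul_le_mul_of_nonneg_left ?_ hWre.2.le
    refine (myHadamard hM).trans (Finset.prod_le_prod
      (fun i _ => (myDiagRePos hM i).1.le) (fun i _ => ?_))
    have : ((W⁻¹ + R) i i).re = (W⁻¹ i i).re + (R i i).re := by
      simp [Matrix.add_apply]
    rw [this]
    linarith [hRd i]

/-- When the total power constraint is inactive (`P_T ≥ m·P`), the matrix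
`R* = P·I − D̄(W⁻¹)` is the full-rank optimum and the joint-constraint capacity equals
the per-antenna-only capacity. -/
theorem stmt6 (m : ℕ) (hm : 1 ≤ m) (W : Matrix (Fin m) (Fin m) ℂ) (hW : W.PosDef)
    (P PT : ℝ) (hP : 0 < P) (hPT : 0 < PT)
    (hPlow : 1 / lamMin hW.1 < P)
    (hPThigh : (m : ℝ) * P ≤ PT) :
    ((P : ℂ) • (1 : Matrix (Fin m) (Fin m) ℂ) - offDiag W⁻¹).PosDef ∧
    (P : ℂ) • (1 : Matrix (Fin m) (Fin m) ℂ) - offDiag W⁻¹ ∈ jointSet m PT P ∧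
    (∀ R ∈ jointSet m PT P,
      mutualInfo W R ≤ mutualInfo W ((P : ℂ) • (1 : Matrix (Fin m) (Fin m) ℂ) - offDiag W⁻¹)) ∧
    sSup (mutualInfo W '' jointSet m PT P) = sSup (mutualInfo W '' pacSet m P) := by
  have hWdet : W.det ≠ 0 := hW.det_pos.ne'
  have hWunit : IsUnit W.det := isUnit_iff_ne_zero.mpr hWdet
  -- eigenvalue facts
  have hne : (Set.range hW.1.eigenvalues).Nonempty := ⟨hW.1.eigenvalues ⟨0, hm⟩, ⟨_, rfl⟩⟩
  have hfin : (Set.range hW.1.eigenvalues).Finite := Set.finite_range _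
  have hmem' : lamMin hW.1 ∈ Set.range hW.1.eigenvalues := hne.csInf_mem hfin
  have hlampos : 0 < lamMin hW.1 := by
    obtain ⟨i, hi⟩ := hmem'
    exact hi ▸ hW.eigenvalues_pos i
  have hlamle : ∀ i, lamMin hW.1 ≤ hW.1.eigenvalues i := fun i =>
    csInf_le hfin.bddBelow ⟨i, rfl⟩
  have hinvlt : ∀ i, (hW.1.eigenvalues i)⁻¹ < P := by
    intro i
    have h1 := one_div_le_one_div_of_le hlampos (hlamle i)
    rw [one_div, one_div] at h1
    rw [one_div] at hPlow
    exact lt_of_le_of_lt h1 hPlow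
  set Rstar : Matrix (Fin m) (Fin m) ℂ :=
    (P : ℂ) • (1 : Matrix (Fin m) (Fin m) ℂ) - offDiag W⁻¹ with hRs
  have hsplit : Rstar = ((P:ℂ) • 1 - W⁻¹) + diagonal (fun i => W⁻¹ i i) := by
    ext i j
    by_cases h : i = j
    · subst h
      simp [hRs, offDiag, Matrix.sub_apply, Matrix.add_apply, Matrix.smul_apply,
        Matrix.one_apply, diagonal]
    · simp [hRs, offDiag, h, Matrix.sub_apply, Matrix.add_apply, Matrix.smul_apply,
        Matrix.one_apply, diagonal]
  have hDg : (diagonal (fun i => W⁻¹ i i)).PosSemidef :=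
    posSemidef_diagonal_iff.mpr fun i => (myDiagPos hW.inv i).le
  have hPD : Rstar.PosDef := by
    rw [hsplit]
    exact (smulOneSubInvPosDef hW hinvlt).add_posSemidef hDg
  have hRdiag : ∀ i, Rstar i i = (P:ℂ) := by
    intro i
    simp [hRs, offDiag, Matrix.sub_apply, Matrix.smul_apply, Matrix.one_apply]
  have htr : Rstar.trace.re = m * P := by
    rw [Matrix.trace]
    simp [Matrix.diag, hRdiag]
  have hmemJ : Rstar ∈ jointSet m PT P := by
    refine ⟨hPD.posSemidef, by rw [htr]; exact hPThigh, fun i => by rw [hRdiag]; simp⟩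
  have hmemP : Rstar ∈ pacSet m P := ⟨hPD.posSemidef, fun i => by rw [hRdiag]; simp⟩
  -- value at Rstar
  have hWinvdiag : ∀ i, W⁻¹ i i = (((W⁻¹ i i).re : ℝ) : ℂ) := fun i =>
    Complex.ext rfl (by simpa using (myDiagRePos hW.inv i).2)
  have hsum2 : W⁻¹ + Rstar = diagonal (fun i => ((P + (W⁻¹ i i).re : ℝ) : ℂ)) := by
    ext i j
    by_cases h : i = j
    · subst h
      simp only [hRs, Matrix.add_apply, Matrix.sub_apply, Matrix.smul_apply, Matrix.one_apply,
        offDiag, if_pos rfl, diagonal_apply_eq, smul_eq_mul, mul_one]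
      rw [hWinvdiag i]
      push_cast
      simp only [Complex.ofReal_re]
      ring
    · simp [hRs, offDiag, h, Matrix.add_apply, Matrix.sub_apply, Matrix.smul_apply,
        Matrix.one_apply, diagonal]
  have hdetRs : (1 + W * Rstar).det.re = W.det.re * ∏ i, (P + (W⁻¹ i i).re) := by
    have hid : (1 : Matrix (Fin m) (Fin m) ℂ) + W * Rstar = W * (W⁻¹ + Rstar) := by
      rw [mul_add, Matrix.mul_nonsing_inv _ hWunit]
    rw [hid, hsum2, det_mul, det_diagonal, ← Complex.ofReal_prod, mul_comm,
      Complex.re_ofReal_mul, mul_comm]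
  have hub : ∀ R ∈ pacSet m P, mutualInfo W R ≤ mutualInfo W Rstar := by
    rintro R ⟨hR1, hR2⟩
    obtain ⟨hpos, hle⟩ := keyBound hW R hR1 hR2
    unfold mutualInfo
    apply Real.log_le_log hpos
    rw [hdetRs]
    exact hle
  refine ⟨hPD, hmemJ, fun R hR => hub R ⟨hR.1, hR.2.2⟩, ?_⟩
  have h1 : IsGreatest (mutualInfo W '' jointSet m PT P) (mutualInfo W Rstar) :=
    ⟨⟨Rstar, hmemJ, rfl⟩, by rintro x ⟨R, hR, rfl⟩; exact hub R ⟨hR.1, hR.2.2⟩⟩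
  have h2 : IsGreatest (mutualInfo W '' pacSet m P) (mutualInfo W Rstar) :=
    ⟨⟨Rstar, hmemP, rfl⟩, by rintro x ⟨R, hR, rfl⟩; exact hub R hR⟩
  rw [h1.csSup_eq, h2.csSup_eq]
end

section
/- Let W = diag(w₁, …, w_m) be a diagonal positive semidefinite matrix and P > 0. Then the isotropic covariance R = P·I maximizes log det(I + W·R) over the per-antenna constraint set {R : R Hermitian, R ⪰ 0, Rᵢᵢ ≤ P for all i}, and the resulting capacity is Σᵢ log(1 + wᵢ·P). -/
open Matrix ComplexOrder

lemma trace_eq_sum_eigen {n : Type*} [Fintype n] [DecidableEq n] {A : Matrix n n ℂ}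
    (hA : A.IsHermitian) : A.trace = ∑ i, (hA.eigenvalues i : ℂ) := by
  conv_lhs => rw [hA.spectral_theorem]
  rw [Unitary.conjStarAlgAut_apply, Matrix.trace_mul_comm, ← Matrix.mul_assoc, Unitary.coe_star_mul_self, Matrix.one_mul,
    Matrix.trace_diagonal]
  rfl

lemma det_re_le_one_of_diag {n : ℕ} (hn : 0 < n) {B : Matrix (Fin n) (Fin n) ℂ}
    (hB : B.PosSemidef) (hd : ∀ i, (B i i).re = 1) : B.det.re ≤ 1 := by
  set lam := hB.1.eigenvalues with hlam
  have hnn : ∀ i, 0 ≤ lam i := hB.eigenvalues_nonneg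
  have hdet : B.det.re = ∏ i, lam i := by
    rw [hB.1.det_eq_prod_eigenvalues]
    norm_cast
  have htr : ∑ i, lam i = (n : ℝ) := by
    have h1 := trace_eq_sum_eigen hB.1
    have h2 : B.trace.re = (n : ℝ) := by
      simp [Matrix.trace, Matrix.diag, Complex.re_sum, hd]
    rw [h1] at h2
    rw [← h2]; norm_cast
  have hAM := Real.geom_mean_le_arith_mean (Finset.univ : Finset (Fin n))
    (fun _ => 1) lam (fun _ _ => zero_le_one) (by simp [hn]) (fun i _ => hnn i)
  simp only [Real.rpow_one, one_mul, Finset.sum_const, Finset.card_univ, Fintype.card_fin,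
    nsmul_eq_mul, mul_one, htr] at hAM
  rw [div_self (by positivity : (n:ℝ) ≠ 0)] at hAM
  have hprod : 0 ≤ ∏ i, lam i := Finset.prod_nonneg fun i _ => hnn i
  calc B.det.re = ∏ i, lam i := hdet
    _ = ((∏ i, lam i) ^ ((n:ℝ)⁻¹)) ^ n := (Real.rpow_inv_natCast_pow hprod hn.ne').symm
    _ ≤ 1 ^ n := pow_le_pow_left₀ (Real.rpow_nonneg hprod _) hAM n
    _ = 1 := one_pow n

lemma det_one_add_re_le_prod {n : ℕ} (hn : 0 < n) {S : Matrix (Fin n) (Fin n) ℂ}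
    (hS : S.PosSemidef) : (1 + S).det.re ≤ ∏ i, (1 + (S i i).re) := by
  have hdiag : ∀ i, 0 ≤ (S i i).re := by
    intro i
    have h := hS.re_dotProduct_nonneg (Pi.single i 1)
    simpa [Matrix.mulVec_single, dotProduct, Pi.single_apply, Finset.sum_ite_eq] using h
  have hreal : ∀ i, S i i = ((S i i).re : ℂ) := by
    intro i
    have := congrFun (congrFun hS.1 i) i
    rw [Matrix.conjTranspose_apply] at this
    exact ((Complex.conj_eq_iff_re).mp this).symm
  set d : Fin n → ℝ := fun i => 1 + (S i i).re with hd
  have hdpos : ∀ i, 0 < d i := fun i => by have := hdiag i; simp [hd]; linarith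
  set e : Fin n → ℂ := fun i => ((Real.sqrt (d i))⁻¹ : ℝ) with he
  set E : Matrix (Fin n) (Fin n) ℂ := Matrix.diagonal e with hE
  have hEH : Eᴴ = E := by
    simp [hE, Matrix.diagonal_conjTranspose, he]
  have h1S : (1 + S).PosSemidef := Matrix.PosSemidef.one.add hS
  have hB : (Eᴴ * (1 + S) * E).PosSemidef := h1S.conjTranspose_mul_mul_same E
  rw [hEH] at hB
  have hBdiag : ∀ i, ((E * (1 + S) * E) i i).re = 1 := by
    intro i
    have : (E * (1 + S) * E) i i = e i * ((1 + S) i i) * e i := by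
      rw [hE, Matrix.mul_diagonal, Matrix.diagonal_mul]
    rw [this]
    have h1 : (1 + S) i i = ((d i : ℝ) : ℂ) := by
      simp only [Matrix.add_apply, Matrix.one_apply_eq, hd]
      rw [hreal i]; simp
    rw [h1, he]
    have hs : Real.sqrt (d i) ≠ 0 := (Real.sqrt_pos.mpr (hdpos i)).ne'
    have hsq : Real.sqrt (d i) * Real.sqrt (d i) = d i := Real.mul_self_sqrt (hdpos i).le
    push_cast
    rw [show ((Real.sqrt (d i) : ℂ))⁻¹ * (d i : ℂ) * ((Real.sqrt (d i) : ℂ))⁻¹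
        = ((d i : ℂ) / ((Real.sqrt (d i) : ℂ) * (Real.sqrt (d i) : ℂ))) by ring]
    rw [show ((Real.sqrt (d i) : ℂ) * (Real.sqrt (d i) : ℂ)) = ((d i : ℝ) : ℂ) by
      rw [← Complex.ofReal_mul, hsq]]
    rw [div_self (by exact_mod_cast (hdpos i).ne')]
    simp
  have hle := det_re_le_one_of_diag hn hB hBdiag
  have hdetE : E.det = ((∏ i, (Real.sqrt (d i))⁻¹ : ℝ) : ℂ) := by
    rw [hE, Matrix.det_diagonal]
    exact (Complex.ofReal_prod Finset.univ fun i => (Real.sqrt (d i))⁻¹).symm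
  set c : ℝ := ∏ i, (Real.sqrt (d i))⁻¹ with hc
  have hcpos : 0 < c := Finset.prod_pos fun i _ => inv_pos.mpr (Real.sqrt_pos.mpr (hdpos i))
  have hc2 : c * c = (∏ i, d i)⁻¹ := by
    rw [hc, ← Finset.prod_mul_distrib, ← Finset.prod_inv_distrib]
    exact Finset.prod_congr rfl fun i _ => by
      rw [← mul_inv, Real.mul_self_sqrt (hdpos i).le]
  have hdetB : ((E * (1 + S) * E).det).re = (c * c) * ((1 + S).det).re := by
    rw [Matrix.det_mul, Matrix.det_mul, hdetE]
    rw [show ((c:ℂ) * (1+S).det * (c:ℂ)) = ((c*c : ℝ):ℂ) * (1+S).det by push_cast; ring]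
    rw [Complex.re_ofReal_mul]
  rw [hdetB, hc2] at hle
  have hppos : 0 < ∏ i, d i := Finset.prod_pos fun i _ => hdpos i
  calc (1 + S).det.re = (∏ i, d i) * ((∏ i, d i)⁻¹ * (1 + S).det.re) := by
        field_simp
    _ ≤ (∏ i, d i) * 1 := by
        exact mul_le_mul_of_nonneg_left hle hppos.le
    _ = ∏ i, (1 + (S i i).re) := by rw [mul_one]

/-- For a diagonal (orthogonal) channel, the isotropic covariance `P·I` is optimal
under the per-antenna constraints alone, with capacity `Σᵢ log(1 + wᵢ·P)`. -/
theorem stmt11 (m : ℕ) (hm : 1 ≤ m) (w : Fin m → ℝ) (hw : ∀ i, 0 ≤ w i)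
    (P : ℝ) (hP : 0 < P) :
    (P : ℂ) • (1 : Matrix (Fin m) (Fin m) ℂ) ∈ pacSet m P ∧
    (∀ R ∈ pacSet m P,
      mutualInfo (Matrix.diagonal (fun i => (w i : ℂ))) R ≤
        mutualInfo (Matrix.diagonal (fun i => (w i : ℂ)))
          ((P : ℂ) • (1 : Matrix (Fin m) (Fin m) ℂ))) ∧
    mutualInfo (Matrix.diagonal (fun i => (w i : ℂ))) ((P : ℂ) • (1 : Matrix (Fin m) (Fin m) ℂ))
      = ∑ i, Real.log (1 + w i * P) := by
  have hwP : ∀ i, 0 < 1 + w i * P := fun i => by nlinarith [hw i, hP]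
  set W : Matrix (Fin m) (Fin m) ℂ := Matrix.diagonal (fun i => (w i : ℂ)) with hWdef
  -- the capacity value
  have hval : mutualInfo W ((P:ℂ) • (1 : Matrix (Fin m) (Fin m) ℂ))
      = ∑ i, Real.log (1 + w i * P) := by
    have h1 : (1 : Matrix (Fin m) (Fin m) ℂ) + W * ((P:ℂ) • 1)
        = Matrix.diagonal (fun i => ((1 + w i * P : ℝ) : ℂ)) := by
      rw [Matrix.mul_smul, Matrix.mul_one, hWdef]
      ext i j
      by_cases h : i = j
      · subst h
        simp [Matrix.add_apply, Matrix.one_apply_eq, Matrix.diagonal_apply_eq,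
          Matrix.smul_apply]
        ring
      · simp [Matrix.add_apply, Matrix.one_apply_ne h, Matrix.diagonal_apply_ne _ h,
          Matrix.smul_apply]
    unfold mutualInfo
    rw [h1, Matrix.det_diagonal, ← Complex.ofReal_prod, Complex.ofReal_re,
      Real.log_prod (fun i _ => (hwP i).ne')]
  have hmem : (P : ℂ) • (1 : Matrix (Fin m) (Fin m) ℂ) ∈ pacSet m P := by
    constructor
    · have hdiag : (P:ℂ) • (1 : Matrix (Fin m) (Fin m) ℂ)
          = Matrix.diagonal (fun _ => (P:ℂ)) := by
        ext i j
        by_cases h : i = j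
        · subst h; simp [Matrix.smul_apply, Matrix.one_apply_eq]
        · simp [Matrix.smul_apply, Matrix.one_apply_ne h, Matrix.diagonal_apply_ne _ h]
      rw [hdiag]
      exact Matrix.PosSemidef.diagonal fun i =>
        show (0:ℂ) ≤ (P:ℂ) by exact_mod_cast hP.le
    · intro i
      simp [Matrix.smul_apply, Matrix.one_apply_eq]
  refine ⟨hmem, ?_, hval⟩
  intro R hR
  obtain ⟨hRpsd, hRdiag⟩ := hR
  set D : Matrix (Fin m) (Fin m) ℂ := Matrix.diagonal (fun i => (Real.sqrt (w i) : ℂ)) with hD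
  have hDH : Dᴴ = D := by
    simp [hD, Matrix.diagonal_conjTranspose]
  have hWD : W = D * D := by
    have hfun : (fun i => (w i : ℂ))
        = fun i => (Real.sqrt (w i) : ℂ) * (Real.sqrt (w i) : ℂ) := by
      funext i
      rw [← Complex.ofReal_mul, Real.mul_self_sqrt (hw i)]
    rw [hD, Matrix.diagonal_mul_diagonal, hWdef, hfun]
  set S : Matrix (Fin m) (Fin m) ℂ := D * R * D with hSdef
  have hSpsd : S.PosSemidef := by
    have := hRpsd.conjTranspose_mul_mul_same D
    rwa [hDH] at this
  have hdet : (1 + W * R).det = (1 + S).det := by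
    rw [hWD, Matrix.mul_assoc, Matrix.det_one_add_mul_comm, hSdef, Matrix.mul_assoc]
  have hRnn : ∀ i, 0 ≤ (R i i).re := by
    intro i
    have h := hRpsd.re_dotProduct_nonneg (Pi.single i 1)
    simpa [Matrix.mulVec_single, dotProduct, Pi.single_apply, Finset.sum_ite_eq] using h
  have hSdiag : ∀ i, (S i i).re = w i * (R i i).re := by
    intro i
    have h1 : S i i = (Real.sqrt (w i) : ℂ) * R i i * (Real.sqrt (w i) : ℂ) := by
      rw [hSdef, hD, Matrix.mul_diagonal, Matrix.diagonal_mul]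
    rw [h1, show ((Real.sqrt (w i) : ℂ) * R i i * (Real.sqrt (w i) : ℂ))
        = ((Real.sqrt (w i) * Real.sqrt (w i) : ℝ) : ℂ) * R i i by push_cast; ring,
      Real.mul_self_sqrt (hw i), Complex.re_ofReal_mul]
  -- positivity of the determinant
  have h1Spd : (1 + S).PosDef := Matrix.PosDef.one.add_posSemidef hSpsd
  have hdetpos : 0 < (1 + S).det.re := by
    have h := h1Spd.det_pos
    rw [Complex.lt_def] at h
    simpa using h.1
  -- Hadamard bound
  have hHad := det_one_add_re_le_prod hm hSpsd
  have hprodle : (∏ i, (1 + (S i i).re)) ≤ ∏ i, (1 + w i * P) := by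
    apply Finset.prod_le_prod
    · intro i _
      rw [hSdiag i]
      have := mul_nonneg (hw i) (hRnn i)
      linarith
    · intro i _
      rw [hSdiag i]
      have := mul_le_mul_of_nonneg_left (hRdiag i) (hw i)
      linarith
  rw [hval]
  unfold mutualInfo
  rw [hdet]
  calc Real.log (1 + S).det.re ≤ Real.log (∏ i, (1 + w i * P)) := by
        apply Real.log_le_log hdetpos
        exact hHad.trans hprodle
    _ = ∑ i, Real.log (1 + w i * P) :=
        Real.log_prod (fun i _ => (hwP i).ne')
end

section
/- Let W be an m×m complex Hermitian positive definite matrix. Then C_PAC(P) − m·log P → log det(W) as P → +∞; i.e., at high SNR the isotropic covariance P·I is asymptotically optimal under the per-antenna constraints, and C_PAC(P) ≈ log det(W) + m·log P. -/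
open Matrix ComplexOrder

noncomputable def Cpac (m : ℕ) (W : Matrix (Fin m) (Fin m) ℂ) (P : ℝ) : ℝ :=
  sSup (mutualInfo W '' pacSet m P)


-- det of PosDef is real cast of its re, re positive
lemma posdef_det_re_pos {m : ℕ} {A : Matrix (Fin m) (Fin m) ℂ} (hA : A.PosDef) :
    0 < A.det.re := by
  have h := hA.det_pos
  rw [Complex.lt_def] at h
  simpa using h.1

lemma posdef_det_eq {m : ℕ} {A : Matrix (Fin m) (Fin m) ℂ} (hA : A.PosDef) :
    A.det = ((A.det.re : ℝ) : ℂ) := by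
  have h := hA.det_pos
  rw [Complex.lt_def] at h
  exact Complex.ext rfl (by simpa using h.2.symm)

lemma det_re_eq_prod {m : ℕ} {A : Matrix (Fin m) (Fin m) ℂ} (hA : A.IsHermitian) :
    A.det.re = ∏ i, hA.eigenvalues i := by
  rw [hA.det_eq_prod_eigenvalues, ← RCLike.ofReal_prod (K := ℂ)]
  exact Complex.ofReal_re _

lemma trace_re_eq_sum {m : ℕ} {A : Matrix (Fin m) (Fin m) ℂ} (hA : A.IsHermitian) :
    A.trace.re = ∑ i, hA.eigenvalues i := by
  have h : A.trace = Matrix.trace (Matrix.diagonal (RCLike.ofReal ∘ hA.eigenvalues) :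
      Matrix (Fin m) (Fin m) ℂ) := by
    conv_lhs => rw [hA.spectral_theorem, Unitary.conjStarAlgAut_apply]
    rw [Matrix.trace_mul_cycle]
    rw [show (star (hA.eigenvectorUnitary : Matrix (Fin m) (Fin m) ℂ)) *
        (hA.eigenvectorUnitary : Matrix (Fin m) (Fin m) ℂ) = 1 from
      Matrix.mem_unitaryGroup_iff'.mp hA.eigenvectorUnitary.2, one_mul]
  rw [h, Matrix.trace_diagonal]
  simp only [Function.comp_apply]
  rw [← RCLike.ofReal_sum (K := ℂ)]
  exact Complex.ofReal_re _

lemma det_one_add_smul {m : ℕ} {W : Matrix (Fin m) (Fin m) ℂ} (hW : W.IsHermitian) (t : ℝ) :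
    (1 + (t : ℂ) • W).det = ((∏ i, (1 + t * hW.eigenvalues i) : ℝ) : ℂ) := by
  set U : Matrix (Fin m) (Fin m) ℂ := (hW.eigenvectorUnitary : Matrix (Fin m) (Fin m) ℂ)
  have hU : U * star U = 1 := Matrix.mem_unitaryGroup_iff.mp hW.eigenvectorUnitary.2
  set D : Matrix (Fin m) (Fin m) ℂ := Matrix.diagonal (RCLike.ofReal ∘ hW.eigenvalues)
  have key : 1 + (t : ℂ) • W = U * (1 + (t : ℂ) • D) * star U := by
    have : U * (1 + (t : ℂ) • D) * star U
        = U * star U + (t : ℂ) • (U * D * star U) := by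
      rw [mul_add, add_mul, mul_one, Matrix.mul_smul, Matrix.smul_mul]
    rw [this, hU]
    conv_lhs => rw [hW.spectral_theorem, Unitary.conjStarAlgAut_apply]
  rw [key]
  have hdet : (U * (1 + (t : ℂ) • D) * star U).det
      = (U * star U).det * (1 + (t : ℂ) • D).det := by
    rw [Matrix.det_mul, Matrix.det_mul, Matrix.det_mul]; ring
  rw [hdet, hU, Matrix.det_one, one_mul]
  have : (1 : Matrix (Fin m) (Fin m) ℂ) + (t : ℂ) • D
      = Matrix.diagonal (fun i => (1 : ℂ) + t * hW.eigenvalues i) := by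
    rw [show (1 : Matrix (Fin m) (Fin m) ℂ) = Matrix.diagonal (fun _ => (1:ℂ)) from
      (Matrix.diagonal_one).symm]
    rw [show (t : ℂ) • D = Matrix.diagonal (fun i => (t : ℂ) * hW.eigenvalues i) from by
      rw [← Matrix.diagonal_smul]; rfl]
    rw [Matrix.diagonal_add]
  rw [this, Matrix.det_diagonal]
  push_cast
  rfl

lemma posdef_det_im {m : ℕ} {A : Matrix (Fin m) (Fin m) ℂ} (hA : A.PosDef) :
    A.det.im = 0 := by
  have h := hA.det_pos
  rw [Complex.lt_def] at h
  simpa using h.2.symm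

lemma upper_bound {m : ℕ} (hm : 1 ≤ m) {W : Matrix (Fin m) (Fin m) ℂ} (hW : W.PosDef)
    {P : ℝ} (hP : 0 < P) {R : Matrix (Fin m) (Fin m) ℂ} (hR : R.PosSemidef)
    (hd : ∀ i, (R i i).re ≤ P) :
    mutualInfo W R ≤ Real.log W.det.re + m * Real.log (P + W⁻¹.trace.re / m) := by
  have hm0 : (0:ℝ) < m := by exact_mod_cast hm
  have hWinv : (W⁻¹).PosDef := hW.inv
  set A := W⁻¹ + R with hAdef
  have hA : A.PosDef := hWinv.add_posSemidef hR
  have hdetu : IsUnit W.det := isUnit_iff_ne_zero.mpr hW.det_pos.ne'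
  have hfac : (1 : Matrix (Fin m) (Fin m) ℂ) + W * R = W * A := by
    rw [hAdef, mul_add, Matrix.mul_nonsing_inv _ hdetu]
  have hre : ((1 : Matrix (Fin m) (Fin m) ℂ) + W * R).det.re = W.det.re * A.det.re := by
    rw [hfac, Matrix.det_mul, Complex.mul_re, posdef_det_im hW, posdef_det_im hA]
    ring
  have hWpos := posdef_det_re_pos hW
  have hApos := posdef_det_re_pos hA
  rw [mutualInfo, hre, Real.log_mul hWpos.ne' hApos.ne']
  gcongr _ + ?_
  -- eigenvalues of A
  set μ : Fin m → ℝ := hA.1.eigenvalues with hμ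
  have hμpos : ∀ i, 0 < μ i := fun i => hA.eigenvalues_pos i
  have hArw : A.det.re = ∏ i, μ i := det_re_eq_prod hA.1
  rw [hArw, Real.log_prod (fun i _ => (hμpos i).ne')]
  -- Jensen for log
  have hne : Nonempty (Fin m) := Fin.pos_iff_nonempty.mp hm
  have h₁ : ∑ _i : Fin m, (m:ℝ)⁻¹ = 1 := by
    rw [Finset.sum_const, Finset.card_univ, Fintype.card_fin, nsmul_eq_mul]
    field_simp
  have hjensen := (strictConcaveOn_log_Ioi.concaveOn).le_map_sum
    (t := Finset.univ) (w := fun _ => (m:ℝ)⁻¹) (p := μ)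
    (fun i _ => by positivity) h₁ (fun i _ => hμpos i)
  simp only [smul_eq_mul] at hjensen
  have hsum1 : ∑ i, (m:ℝ)⁻¹ * Real.log (μ i) = (m:ℝ)⁻¹ * ∑ i, Real.log (μ i) := by
    rw [Finset.mul_sum]
  have hsum2 : ∑ i, (m:ℝ)⁻¹ * μ i = (m:ℝ)⁻¹ * ∑ i, μ i := by rw [Finset.mul_sum]
  rw [hsum1, hsum2] at hjensen
  have hstep : ∑ i, Real.log (μ i) ≤ (m:ℝ) * Real.log ((m:ℝ)⁻¹ * ∑ i, μ i) := by
    have := mul_le_mul_of_nonneg_left hjensen hm0.le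
    calc ∑ i, Real.log (μ i) = (m:ℝ) * ((m:ℝ)⁻¹ * ∑ i, Real.log (μ i)) := by
          field_simp
      _ ≤ (m:ℝ) * Real.log ((m:ℝ)⁻¹ * ∑ i, μ i) := this
  refine hstep.trans ?_
  gcongr (m:ℝ) * ?_
  have hμsumpos : 0 < ∑ i, μ i :=
    Finset.sum_pos (fun i _ => hμpos i) Finset.univ_nonempty
  have htr : ∑ i, μ i = W⁻¹.trace.re + R.trace.re := by
    rw [← trace_re_eq_sum hA.1, hAdef, Matrix.trace_add, Complex.add_re]
  have hRtr : R.trace.re ≤ m * P := by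
    rw [Matrix.trace, Complex.re_sum]
    calc ∑ i, (R.diag i).re ≤ ∑ _i : Fin m, P := Finset.sum_le_sum (fun i _ => hd i)
      _ = m * P := by rw [Finset.sum_const, Finset.card_univ, Fintype.card_fin, nsmul_eq_mul]
  apply Real.log_le_log (by positivity)
  rw [htr]
  calc (m:ℝ)⁻¹ * (W⁻¹.trace.re + R.trace.re) ≤ (m:ℝ)⁻¹ * (W⁻¹.trace.re + m * P) := by
        gcongr
    _ = P + W⁻¹.trace.re / m := by field_simp; ring

lemma lower_bound {m : ℕ} {W : Matrix (Fin m) (Fin m) ℂ} (hW : W.PosDef)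
    {P : ℝ} (hP : 0 < P) :
    (m:ℝ) * Real.log P + Real.log W.det.re ≤ mutualInfo W ((P:ℂ) • 1) := by
  have h1 : W * ((P:ℂ) • 1) = (P:ℂ) • W := by rw [Matrix.mul_smul, mul_one]
  rw [mutualInfo, h1, det_one_add_smul hW.1 P, Complex.ofReal_re]
  set lam : Fin m → ℝ := hW.1.eigenvalues with hlam
  have hl0 : ∀ i, 0 < lam i := fun i => hW.eigenvalues_pos i
  have hppos : (0:ℝ) < ∏ i, P * lam i :=
    Finset.prod_pos (fun i _ => mul_pos hP (hl0 i))
  have hle : ∏ i, (P * lam i) ≤ ∏ i, (1 + P * lam i) :=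
    Finset.prod_le_prod (fun i _ => (mul_pos hP (hl0 i)).le)
      (fun i _ => by nlinarith [mul_pos hP (hl0 i)])
  refine le_trans ?_ (Real.log_le_log hppos hle)
  have hsplit : ∏ i, (P * lam i) = P ^ m * ∏ i, lam i := by
    rw [Finset.prod_mul_distrib, Finset.prod_const, Finset.card_univ, Fintype.card_fin]
  have hlpos : (0:ℝ) < ∏ i, lam i := Finset.prod_pos (fun i _ => hl0 i)
  rw [hsplit, Real.log_mul (pow_pos hP m).ne' hlpos.ne', Real.log_pow,
    det_re_eq_prod hW.1]

/-- High-SNR asymptotics of the per-antenna-constrained capacity: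
`C_PAC(P) − m·log P → log det W` as `P → ∞`, i.e. the isotropic covariance `P·I`
is asymptotically optimal. -/
theorem stmt14 (m : ℕ) (hm : 1 ≤ m) (W : Matrix (Fin m) (Fin m) ℂ) (hW : W.PosDef) :
    Filter.Tendsto (fun P : ℝ => Cpac m W P - m * Real.log P)
      Filter.atTop (nhds (Real.log W.det.re)) := by
  set c : ℝ := W⁻¹.trace.re / m with hc_def
  have hWinv : (W⁻¹).PosDef := hW.inv
  have hc : 0 ≤ c := by
    have h1 : W⁻¹.trace.re = ∑ i, hWinv.1.eigenvalues i := trace_re_eq_sum hWinv.1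
    have h2 : 0 ≤ W⁻¹.trace.re := by
      rw [h1]; exact Finset.sum_nonneg (fun i _ => (hWinv.eigenvalues_pos i).le)
    positivity
  have key : ∀ P : ℝ, 0 < P →
      Real.log W.det.re ≤ Cpac m W P - m * Real.log P ∧
      Cpac m W P - m * Real.log P ≤ Real.log W.det.re + m * Real.log (1 + c / P) := by
    intro P hP
    have hmem : ((P:ℂ) • 1 : Matrix (Fin m) (Fin m) ℂ) ∈ pacSet m P := by
      constructor
      · have h1 : ((P:ℂ) • 1 : Matrix (Fin m) (Fin m) ℂ)
            = Matrix.diagonal (fun _ => (P:ℂ)) := by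
          ext i j
          by_cases h : i = j <;>
            simp [Matrix.smul_apply, Matrix.one_apply, Matrix.diagonal_apply, h]
        rw [h1]
        exact Matrix.PosSemidef.diagonal (fun i => Complex.zero_le_real.mpr hP.le)
      · intro i
        simp [Matrix.smul_apply, Matrix.one_apply_eq]
    have hub : ∀ x ∈ mutualInfo W '' pacSet m P,
        x ≤ Real.log W.det.re + m * Real.log (P + c) := by
      rintro x ⟨R, hR, rfl⟩
      exact upper_bound hm hW hP hR.1 hR.2
    have hbdd : BddAbove (mutualInfo W '' pacSet m P) := ⟨_, hub⟩
    have hCle : Cpac m W P ≤ Real.log W.det.re + m * Real.log (P + c) :=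
      csSup_le ⟨_, Set.mem_image_of_mem _ hmem⟩ hub
    have hCge : (m:ℝ) * Real.log P + Real.log W.det.re ≤ Cpac m W P :=
      (lower_bound hW hP).trans (le_csSup hbdd (Set.mem_image_of_mem _ hmem))
    have hlogdiv : Real.log (P + c) - Real.log P = Real.log (1 + c / P) := by
      rw [← Real.log_div (by positivity) hP.ne', add_div, div_self hP.ne']
    constructor
    · linarith
    · have : Cpac m W P - m * Real.log P
          ≤ Real.log W.det.re + m * (Real.log (P + c) - Real.log P) := by linarith
      rwa [hlogdiv] at this
  have h0 : Filter.Tendsto (fun P : ℝ => c / P) Filter.atTop (nhds 0) :=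
    Filter.Tendsto.div_atTop tendsto_const_nhds Filter.tendsto_id
  have h1 : Filter.Tendsto (fun P : ℝ => Real.log (1 + c / P)) Filter.atTop (nhds 0) := by
    have h2 : Filter.Tendsto (fun P : ℝ => 1 + c / P) Filter.atTop (nhds 1) := by
      simpa using tendsto_const_nhds.add h0
    have h3 := (Real.continuousAt_log one_ne_zero).tendsto.comp h2
    simpa [Real.log_one, Function.comp_def] using h3
  have hu : Filter.Tendsto (fun P : ℝ => Real.log W.det.re + m * Real.log (1 + c / P))
      Filter.atTop (nhds (Real.log W.det.re)) := by
    have h4 : Filter.Tendsto (fun P : ℝ => Real.log W.det.re + (m:ℝ) * Real.log (1 + c / P))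
        Filter.atTop (nhds (Real.log W.det.re + (m:ℝ) * 0)) :=
      (tendsto_const_nhds (x := Real.log W.det.re)).add (h1.const_mul (m:ℝ))
    simpa using h4
  refine tendsto_of_tendsto_of_tendsto_of_le_of_le' tendsto_const_nhds hu ?_ ?_
  · filter_upwards [Filter.eventually_gt_atTop 0] with P hP using (key P hP).1
  · filter_upwards [Filter.eventually_gt_atTop 0] with P hP using (key P hP).2
end
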